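/- arXiv:2305.01442 — 4 statements merged into one kernel-verified Lean document; each statement's English description precedes it below -/
import Mathlib

section
/- Let p be a prime, q a positive integer divisible by p, m ≥ 3, 0 ≤ δ < m, and let the sequences a^t_σ of length p^m be defined as in the stated construction. Then for every t ∈ {0,…,p^{k+δ}−1} and every integer τ with either 1 ≤ |τ| ≤ p^{m−δ}−1 or p^m − p^{m−δ} + 1 ≤ |τ| ≤ p^m − 1, the sum of aperiodic autocorrelations vanishes: Σ_{σ=0}^{p^k−1} A(a^t_σ)(τ) = 0. -/
open Finset

def dig (p r i : ℕ) : ℕ := r / p ^ (i - 1) % p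

namespace SZ

def setd (p u c n : ℕ) : ℕ := n % p^(u-1) + c * p^(u-1) + n / p^u * p^u

variable {p u l c : ℕ} (hp : 2 ≤ p)

include hp

lemma dig_lt (r l : ℕ) : dig p r l < p := Nat.mod_lt _ (by omega)

omit hp in
lemma dec (hu : 1 ≤ u) (n : ℕ) :
    n % p^(u-1) + (dig p n u) * p^(u-1) + n / p^u * p^u = n := by
  have h1 : p ^ u = p ^ (u-1) * p := by
    rw [← pow_succ]; congr 1; omega
  have h2 : n % p ^ u % p^(u-1) = n % p^(u-1) := Nat.mod_mod_of_dvd _ ⟨p, h1⟩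
  have h3 : n % p ^ u / p ^ (u-1) = n / p^(u-1) % p := by
    rw [h1, Nat.mod_mul_right_div_self]
  have h4 := Nat.div_add_mod (n % p ^ u) (p^(u-1))
  rw [h3, h2, Nat.mul_comm (p^(u-1))] at h4
  have h5 : p ^ u * (n / p ^ u) + n % p ^ u = n := Nat.div_add_mod _ _
  rw [Nat.mul_comm] at h5
  unfold dig
  omega

lemma setd_lt {L n : ℕ} (hu : 1 ≤ u) (huL : u ≤ L) (hn : n < p^L) (hc : c < p) :
    setd p u c n < p^L := by
  have h1 : n % p^(u-1) < p^(u-1) := Nat.mod_lt _ (by positivity)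
  have h2 : n / p^u < p^(L-u) := by
    apply Nat.div_lt_of_lt_mul
    calc n < p^L := hn
    _ = p^u * p^(L-u) := by rw [← pow_add]; congr 1; omega
  have h3 : p^u * p^(L-u) = p^L := by rw [← pow_add]; congr 1; omega
  have hpow : p ^ u = p ^ (u-1) * p := by rw [← pow_succ]; congr 1; omega
  have e1 : c * p^(u-1) ≤ (p-1) * p^(u-1) := Nat.mul_le_mul_right _ (by omega)
  have e2 : (p-1) * p^(u-1) + p^(u-1) = p^u := by
    have hp1 : p - 1 + 1 = p := by omega
    calc (p-1) * p^(u-1) + p^(u-1) = (p-1+1) * p^(u-1) := by ring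
    _ = p * p^(u-1) := by rw [hp1]
    _ = p ^ u := by rw [hpow]; ring
  have e3 : n / p^u * p^u ≤ (p^(L-u) - 1) * p^u := Nat.mul_le_mul_right _ (by omega)
  have e4 : (p^(L-u) - 1) * p^u + p^u = p^L := by
    have hge : 1 ≤ p^(L-u) := Nat.one_le_pow _ _ (by omega)
    have : (p^(L-u) - 1 + 1) = p^(L-u) := by omega
    calc (p^(L-u) - 1) * p^u + p^u = (p^(L-u) - 1 + 1) * p^u := by ring
    _ = p^(L-u) * p^u := by rw [this]
    _ = p^L := by rw [Nat.mul_comm]; exact h3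
  unfold setd
  omega

lemma setd_dig_self (hu : 1 ≤ u) (hc : c < p) (n : ℕ) : dig p (setd p u c n) u = c := by
  have hpow : p ^ u = p ^ (u-1) * p := by rw [← pow_succ]; congr 1; omega
  have h1 : n % p^(u-1) < p^(u-1) := Nat.mod_lt _ (by positivity)
  unfold dig setd
  rw [show n % p^(u-1) + c * p^(u-1) + n / p^u * p^u
      = n % p^(u-1) + (c + n / p^u * p) * p^(u-1) by rw [hpow]; ring]
  rw [Nat.add_mul_div_right _ _ (show 0 < p^(u-1) by positivity),
      Nat.div_eq_of_lt h1, zero_add, Nat.add_mul_mod_self_right, Nat.mod_eq_of_lt hc]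

lemma setd_dig_ne (hu : 1 ≤ u) (hl : 1 ≤ l) (hne : l ≠ u) (hc : c < p) (n : ℕ) :
    dig p (setd p u c n) l = dig p n l := by
  have hpow : p ^ u = p ^ (u-1) * p := by rw [← pow_succ]; congr 1; omega
  have h1 : n % p^(u-1) < p^(u-1) := Nat.mod_lt _ (by positivity)
  rcases lt_or_gt_of_ne hne with h | h
  · -- l < u
    have hmod : setd p u c n % p^(u-1) = n % p^(u-1) := by
      unfold setd
      rw [show n % p^(u-1) + c * p^(u-1) + n / p^u * p^u
          = n % p^(u-1) + (c + n / p^u * p) * p^(u-1) by rw [hpow]; ring]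
      rw [Nat.add_mul_mod_self_right, Nat.mod_mod_of_dvd _ dvd_rfl]
    have hdvd : p ^ l ∣ p ^ (u-1) := pow_dvd_pow _ (by omega)
    have hml : setd p u c n % p^l = n % p^l := by
      rw [← Nat.mod_mod_of_dvd (setd p u c n) hdvd, hmod, Nat.mod_mod_of_dvd _ hdvd]
    have key : ∀ a : ℕ, dig p a l = a % p^l / p^(l-1) % p := by
      intro a
      have hpl : p ^ l = p ^ (l-1) * p := by rw [← pow_succ]; congr 1; omega
      unfold dig
      rw [hpl, Nat.mod_mul_right_div_self, Nat.mod_mod_of_dvd _ dvd_rfl]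
    rw [key, key, hml]
  · -- l > u
    have hdiv : setd p u c n / p^u = n / p^u := by
      unfold setd
      rw [Nat.add_mul_div_right _ _ (show 0 < p^u by positivity)]
      have h0 : (n % p^(u-1) + c * p^(u-1)) / p^u = 0 := by
        apply Nat.div_eq_of_lt
        have hc1 : c ≤ p - 1 := by omega
        have := pow_pos (show 0 < p by omega) (u-1)
        have e1 : c * p^(u-1) ≤ (p-1) * p^(u-1) := Nat.mul_le_mul_right _ (by omega)
        have e2 : p^(u-1) + (p-1) * p^(u-1) = p^u := by
          have hp1 : 1 + (p - 1) = p := by omega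
          calc p^(u-1) + (p-1) * p^(u-1) = (1+(p-1)) * p^(u-1) := by ring
          _ = p * p^(u-1) := by rw [hp1]
          _ = p ^ u := by rw [hpow]; ring
        omega
      omega
    have key : ∀ a : ℕ, dig p a l = a / p^u / p^(l-1-u) % p := by
      intro a
      unfold dig
      rw [Nat.div_div_eq_div_mul, ← pow_add, show u + (l-1-u) = l - 1 by omega]
    rw [key, key, hdiv]

omit hp in
lemma setd_cast (hu : 1 ≤ u) (n c : ℕ) :
    (setd p u c n : ℤ) = (n : ℤ) + ((c : ℤ) - (dig p n u : ℤ)) * (p:ℤ)^(u-1) := by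
  have h := dec (p := p) hu n
  have h2 : ((n % p^(u-1) : ℕ) : ℤ) + (dig p n u : ℤ) * (p:ℤ)^(u-1)
      + ((n / p^u : ℕ) : ℤ) * (p:ℤ)^u = (n:ℤ) := by exact_mod_cast h
  unfold setd
  simp only [Nat.cast_add, Nat.cast_mul, Nat.cast_pow]
  linear_combination h2

omit hp in
lemma mod_eq_of_digs_eq {a b : ℕ} (L : ℕ) (h : ∀ l, 1 ≤ l → l ≤ L → dig p a l = dig p b l) :
    a % p^L = b % p^L := by
  induction L with
  | zero => simp [Nat.mod_one]
  | succ L ih =>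
    have hstep : ∀ n : ℕ, n % p^(L+1) = n % p^L + dig p n (L+1) * p^L := by
      intro n
      have h1 : p ^ (L+1) = p ^ L * p := pow_succ p L
      have h2 : n % p ^ (L+1) % p^L = n % p^L := Nat.mod_mod_of_dvd _ ⟨p, h1⟩
      have h3 : n % p ^ (L+1) / p ^ L = n / p^L % p := by
        rw [h1, Nat.mod_mul_right_div_self]
      have h4 := Nat.div_add_mod (n % p ^ (L+1)) (p^L)
      rw [h3, h2, Nat.mul_comm (p^L)] at h4
      have hdig : dig p n (L+1) = n / p ^ L % p := by unfold dig; simp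
      rw [hdig]
      omega
    rw [hstep a, hstep b, ih (fun l h1 h2 => h l h1 (by omega)), h (L+1) (by omega) le_rfl]

end SZ

noncomputable def eomega (q : ℕ) (x : ZMod q) : ℂ :=
  Complex.exp (2 * Real.pi * Complex.I * (x.val : ℂ) / (q : ℂ))

namespace SZ
variable {q : ℕ} [NeZero q]

lemma eomega_eq_pow (x : ZMod q) :
    eomega q x = (Complex.exp (2 * Real.pi * Complex.I / q)) ^ (x.val) := by
  rw [← Complex.exp_nat_mul]
  unfold eomega
  ring_nf

lemma zeta_pow_q : (Complex.exp (2 * Real.pi * Complex.I / q)) ^ q = 1 :=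
  (Complex.isPrimitiveRoot_exp q (NeZero.ne q)).pow_eq_one

lemma zeta_pow_mod (a : ℕ) : (Complex.exp (2 * Real.pi * Complex.I / q)) ^ (a % q)
    = (Complex.exp (2 * Real.pi * Complex.I / q)) ^ a := by
  conv_rhs => rw [← Nat.div_add_mod a q, pow_add, pow_mul, zeta_pow_q (q := q), one_pow, one_mul]

lemma eomega_add (x y : ZMod q) : eomega q (x + y) = eomega q x * eomega q y := by
  rw [eomega_eq_pow, eomega_eq_pow, eomega_eq_pow, ← pow_add, ZMod.val_add, zeta_pow_mod]

lemma eomega_zero : eomega q 0 = 1 := by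
  rw [eomega_eq_pow, ZMod.val_zero, pow_zero]

lemma eomega_nsmul (n : ℕ) (x : ZMod q) : eomega q (n • x) = eomega q x ^ n := by
  induction n with
  | zero => simp [eomega_zero]
  | succ n ih => rw [succ_nsmul, eomega_add, ih, pow_succ]

lemma eomega_eq_one_iff (x : ZMod q) : eomega q x = 1 ↔ x = 0 := by
  rw [eomega_eq_pow,
    (Complex.isPrimitiveRoot_exp q (NeZero.ne q)).pow_eq_one_iff_dvd]
  constructor
  · intro h
    have hx0 : x.val = 0 := Nat.eq_zero_of_dvd_of_lt h (ZMod.val_lt x)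
    exact (ZMod.val_eq_zero x).mp hx0
  · rintro rfl; simp [ZMod.val_zero]

lemma eomega_star (x : ZMod q) : eomega q (-x) = star (eomega q x) := by
  have habs : ‖eomega q x‖ = 1 := by
    have : eomega q x = Complex.exp (((2 * Real.pi * (x.val) / q : ℝ) : ℂ) * Complex.I) := by
      unfold eomega
      push_cast
      ring_nf
    rw [this, Complex.norm_exp_ofReal_mul_I]
  have hmul : eomega q x * eomega q (-x) = 1 := by
    rw [← eomega_add, add_neg_cancel, eomega_zero]
  have hinv : (eomega q x)⁻¹ = eomega q (-x) := inv_eq_of_mul_eq_one_right hmul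
  rw [← hinv, Complex.inv_def, Complex.normSq_eq_norm_sq, habs]
  simp [RCLike.star_def]

lemma geom_zero {η : ℂ} {n : ℕ} (hη : η ≠ 1) (hn : η ^ n = 1) :
    ∑ c ∈ Finset.range n, η ^ c = 0 := by
  rw [geom_sum_eq hη, hn]
  simp

end SZ

namespace SZ
section zmodq
variable {p q : ℕ} (hp : 2 ≤ p) (hq : q ≠ 0) (hpq : p ∣ q)

include hq hpq in
lemma qp_mul_p : ((q / p : ℕ) : ZMod q) * (p : ZMod q) = 0 := by
  have h1 : ((q / p * p : ℕ) : ZMod q) = ((q : ℕ) : ZMod q) := by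
    rw [Nat.div_mul_cancel hpq]
  calc ((q / p : ℕ) : ZMod q) * (p : ZMod q) = ((q / p * p : ℕ) : ZMod q) := by push_cast; ring
  _ = 0 := by rw [h1, ZMod.natCast_self]

include hp hq hpq in
lemma incr {b : ℕ} (hb : b < p) :
    ((q / p : ℕ) : ZMod q) * (((b + 1) % p : ℕ) : ZMod q)
      = ((q / p : ℕ) : ZMod q) * (b : ZMod q) + ((q / p : ℕ) : ZMod q) := by
  rcases Nat.lt_or_ge (b + 1) p with h | h
  · rw [Nat.mod_eq_of_lt h]; push_cast; ring
  · have hbp : b + 1 = p := by omega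
    have h0 : (b + 1) % p = 0 := by rw [hbp, Nat.mod_self]
    rw [h0, Nat.cast_zero, mul_zero]
    have hb' : (b : ZMod q) = (p : ZMod q) - 1 := by
      rw [← hbp]; push_cast; ring
    rw [hb']
    linear_combination -(qp_mul_p hq hpq)

include hp hq hpq in
lemma qp_mul_sub_ne_zero {a b : ℕ} (ha : a < p) (hb : b < p) (hne : a ≠ b) :
    ((q / p : ℕ) : ZMod q) * ((a : ZMod q) - (b : ZMod q)) ≠ 0 := by
  haveI : NeZero q := ⟨hq⟩
  haveI : NeZero p := ⟨by omega⟩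
  intro h
  have hcast : (((((q / p : ℕ) : ℤ)) * ((a : ℤ) - b) : ℤ) : ZMod q) = 0 := by
    rw [Int.cast_mul, Int.cast_sub, Int.cast_natCast, Int.cast_natCast, Int.cast_natCast]
    exact h
  rw [ZMod.intCast_zmod_eq_zero_iff_dvd] at hcast
  have hq' : (q : ℤ) = ((q / p : ℕ) : ℤ) * p := by
    exact_mod_cast (Nat.div_mul_cancel hpq).symm
  rw [hq'] at hcast
  have hqp0 : ((q / p : ℕ) : ℤ) ≠ 0 := by
    have : 0 < q / p := Nat.div_pos (Nat.le_of_dvd (by omega) hpq) (by omega)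
    exact_mod_cast this.ne'
  have hd : (p : ℤ) ∣ (a : ℤ) - b := by
    rcases hcast with ⟨c, hc⟩
    rw [mul_assoc] at hc
    exact ⟨c, mul_left_cancel₀ hqp0 hc⟩
  have h2 : (((a : ℤ) - b : ℤ) : ZMod p) = 0 := (ZMod.intCast_zmod_eq_zero_iff_dvd _ p).mpr hd
  push_cast at h2
  have h3 : (a : ZMod p) = (b : ZMod p) := by linear_combination h2
  have : a = b := by
    have := congrArg ZMod.val h3
    rwa [ZMod.val_cast_of_lt ha, ZMod.val_cast_of_lt hb] at this
  exact hne this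

end zmodq
end SZ

namespace SZ

lemma orbit_cancel {α : Type} [DecidableEq α] (T : Finset α) (F : α → ℂ) (n : ℕ) (hn : n ≠ 0)
    (ρ : α → α) (hm : ∀ z ∈ T, ρ z ∈ T) (hinj : Set.InjOn ρ T)
    (horb : ∀ z ∈ T, ∑ c ∈ Finset.range n, F (ρ^[c] z) = 0) : ∑ z ∈ T, F z = 0 := by
  have hmc : ∀ c, ∀ z ∈ T, ρ^[c] z ∈ T := by
    intro c
    induction c with
    | zero => simp
    | succ c ih => intro z hz; rw [Function.iterate_succ_apply']; exact hm _ (ih z hz)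
  have hinjc : ∀ c, Set.InjOn (ρ^[c]) T := by
    intro c
    induction c with
    | zero => simp [Set.injOn_id]
    | succ c ih =>
      intro z hz z' hz' hee
      rw [Function.iterate_succ_apply', Function.iterate_succ_apply'] at hee
      exact ih hz hz' (hinj (by exact_mod_cast hmc c z hz) (by exact_mod_cast hmc c z' hz') hee)
  have himg : ∀ c, Finset.image (ρ^[c]) T = T := by
    intro c
    apply Finset.eq_of_subset_of_card_le
    · intro w hw
      rcases Finset.mem_image.mp hw with ⟨z, hz, rfl⟩
      exact hmc c z hz
    · rw [Finset.card_image_of_injOn (hinjc c)]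
  have hsum : ∀ c, ∑ z ∈ T, F (ρ^[c] z) = ∑ z ∈ T, F z := by
    intro c
    rw [← Finset.sum_image (fun x hx y hy h => hinjc c hx hy h), himg c]
  have key : (n : ℂ) * ∑ z ∈ T, F z = 0 := by
    calc (n : ℂ) * ∑ z ∈ T, F z = ∑ _c ∈ Finset.range n, ∑ z ∈ T, F z := by
          rw [Finset.sum_const, Finset.card_range, nsmul_eq_mul]
    _ = ∑ c ∈ Finset.range n, ∑ z ∈ T, F (ρ^[c] z) := by
          exact Finset.sum_congr rfl (fun c _ => (hsum c).symm)
    _ = ∑ z ∈ T, ∑ c ∈ Finset.range n, F (ρ^[c] z) := Finset.sum_comm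
    _ = 0 := Finset.sum_eq_zero horb
  have hn' : (n : ℂ) ≠ 0 := Nat.cast_ne_zero.mpr hn
  exact (mul_eq_zero.mp key).resolve_left hn'

end SZ

namespace SZ

def Dset (p m δ τ' i : ℕ) : Finset ℕ :=
  (Finset.Icc 1 (m - δ)).filter (fun l => dig p i l ≠ dig p (i + τ') l)

noncomputable def bb (p m δ k τ' : ℕ) (mcard : ℕ → ℕ) (pmap : ℕ → ℕ → ℕ) (i : ℕ) : ℕ :=
  sInf {β | β ∈ Finset.Icc 1 k ∧ ∃ γ ∈ Finset.Icc 1 (mcard β), pmap β γ ∈ Dset p m δ τ' i}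

noncomputable def gg (p m δ k τ' : ℕ) (mcard : ℕ → ℕ) (pmap : ℕ → ℕ → ℕ) (i : ℕ) : ℕ :=
  sInf {γ | γ ∈ Finset.Icc 1 (mcard (bb p m δ k τ' mcard pmap i)) ∧
    pmap (bb p m δ k τ' mcard pmap i) γ ∈ Dset p m δ τ' i}

noncomputable def nxt (p m δ k τ' : ℕ) (mcard : ℕ → ℕ) (pmap : ℕ → ℕ → ℕ) (i : ℕ) : ℕ :=
  pmap (bb p m δ k τ' mcard pmap i) (gg p m δ k τ' mcard pmap i)

noncomputable def rho (p m δ k τ' : ℕ) (mcard : ℕ → ℕ) (pmap : ℕ → ℕ → ℕ) (z : ℕ × ℕ) :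
    ℕ × ℕ :=
  if gg p m δ k τ' mcard pmap z.2 = 1 then
    (setd p (bb p m δ k τ' mcard pmap z.2)
      ((dig p z.1 (bb p m δ k τ' mcard pmap z.2) + 1) % p) z.1, z.2)
  else
    (z.1, setd p (pmap (bb p m δ k τ' mcard pmap z.2) (gg p m δ k τ' mcard pmap z.2 - 1))
      ((dig p z.2 (pmap (bb p m δ k τ' mcard pmap z.2) (gg p m δ k τ' mcard pmap z.2 - 1)) + 1) % p)
      z.2)

lemma bb_congr {p m δ k τ' mcard pmap i i'} (h : Dset p m δ τ' i' = Dset p m δ τ' i) :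
    bb p m δ k τ' mcard pmap i' = bb p m δ k τ' mcard pmap i := by
  unfold bb; rw [h]

lemma gg_congr {p m δ k τ' mcard pmap i i'} (h : Dset p m δ τ' i' = Dset p m δ τ' i) :
    gg p m δ k τ' mcard pmap i' = gg p m δ k τ' mcard pmap i := by
  unfold gg; rw [bb_congr h, h]

lemma nxt_congr {p m δ k τ' mcard pmap i i'} (h : Dset p m δ τ' i' = Dset p m δ τ' i) :
    nxt p m δ k τ' mcard pmap i' = nxt p m δ k τ' mcard pmap i := by
  unfold nxt; rw [bb_congr h, gg_congr h]

lemma Dset_nonempty {p m δ τ' i : ℕ} (hτd : ¬ p ^ (m - δ) ∣ τ') :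
    (Dset p m δ τ' i).Nonempty := by
  by_contra h
  rw [Finset.not_nonempty_iff_eq_empty] at h
  have hall : ∀ l, 1 ≤ l → l ≤ m - δ → dig p i l = dig p (i + τ') l := by
    intro l h1 h2
    by_contra hne
    have : l ∈ Dset p m δ τ' i := by
      simp [Dset, Finset.mem_filter, Finset.mem_Icc]
      exact ⟨⟨h1, h2⟩, hne⟩
    rw [h] at this
    exact absurd this (Finset.notMem_empty l)
  have hmod := mod_eq_of_digs_eq (p := p) (m - δ) hall
  have : p ^ (m - δ) ∣ (i + τ') - i := (Nat.modEq_iff_dvd' (by omega)).mp hmod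
  simp at this
  exact hτd this

/-- uniqueness of chain coordinates -/
lemma coords_uniq {m δ k : ℕ} {mcard : ℕ → ℕ} {pmap : ℕ → ℕ → ℕ}
    (hpart : ∀ l ∈ Finset.Icc 1 (m - δ), ∃! bg : ℕ × ℕ,
      bg.1 ∈ Finset.Icc 1 k ∧ bg.2 ∈ Finset.Icc 1 (mcard bg.1) ∧ pmap bg.1 bg.2 = l)
    (hmaps : ∀ β ∈ Finset.Icc 1 k, ∀ γ ∈ Finset.Icc 1 (mcard β),
      pmap β γ ∈ Finset.Icc 1 (m - δ))
    {β γ β' γ' : ℕ} (hβ : β ∈ Finset.Icc 1 k) (hγ : γ ∈ Finset.Icc 1 (mcard β))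
    (hβ' : β' ∈ Finset.Icc 1 k) (hγ' : γ' ∈ Finset.Icc 1 (mcard β'))
    (h : pmap β γ = pmap β' γ') : β = β' ∧ γ = γ' := by
  have hl := hmaps β hβ γ hγ
  rcases hpart (pmap β γ) hl with ⟨bg, _, huniq⟩
  have h1 := huniq (β, γ) ⟨hβ, hγ, rfl⟩
  have h2 := huniq (β', γ') ⟨hβ', hγ', h.symm⟩
  have h3 : (β, γ) = (β', γ') := h1.trans h2.symm
  exact ⟨congrArg Prod.fst h3, congrArg Prod.snd h3⟩

lemma bb_mem {p m δ k τ' : ℕ} {mcard : ℕ → ℕ} {pmap : ℕ → ℕ → ℕ} {i : ℕ}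
    (hτd : ¬ p ^ (m - δ) ∣ τ')
    (hpart : ∀ l ∈ Finset.Icc 1 (m - δ), ∃! bg : ℕ × ℕ,
      bg.1 ∈ Finset.Icc 1 k ∧ bg.2 ∈ Finset.Icc 1 (mcard bg.1) ∧ pmap bg.1 bg.2 = l) :
    bb p m δ k τ' mcard pmap i ∈ Finset.Icc 1 k ∧
    ∃ γ ∈ Finset.Icc 1 (mcard (bb p m δ k τ' mcard pmap i)),
      pmap (bb p m δ k τ' mcard pmap i) γ ∈ Dset p m δ τ' i := by
  have hne : {β | β ∈ Finset.Icc 1 k ∧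
      ∃ γ ∈ Finset.Icc 1 (mcard β), pmap β γ ∈ Dset p m δ τ' i}.Nonempty := by
    rcases Dset_nonempty (p := p) (m := m) (δ := δ) (τ' := τ') (i := i) hτd with ⟨l, hl⟩
    have hlI : l ∈ Finset.Icc 1 (m - δ) := (Finset.mem_filter.mp hl).1
    rcases hpart l hlI with ⟨⟨β, γ⟩, ⟨hβ, hγ, heq⟩, _⟩
    exact ⟨β, hβ, γ, hγ, by rwa [heq]⟩
  exact Nat.sInf_mem hne

lemma gg_mem {p m δ k τ' : ℕ} {mcard : ℕ → ℕ} {pmap : ℕ → ℕ → ℕ} {i : ℕ}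
    (hτd : ¬ p ^ (m - δ) ∣ τ')
    (hpart : ∀ l ∈ Finset.Icc 1 (m - δ), ∃! bg : ℕ × ℕ,
      bg.1 ∈ Finset.Icc 1 k ∧ bg.2 ∈ Finset.Icc 1 (mcard bg.1) ∧ pmap bg.1 bg.2 = l) :
    gg p m δ k τ' mcard pmap i ∈ Finset.Icc 1 (mcard (bb p m δ k τ' mcard pmap i)) ∧
      pmap (bb p m δ k τ' mcard pmap i) (gg p m δ k τ' mcard pmap i) ∈ Dset p m δ τ' i := by
  have h := (bb_mem (p := p) (m := m) (δ := δ) (k := k) (τ' := τ') (mcard := mcard)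
    (pmap := pmap) (i := i) hτd hpart).2
  exact Nat.sInf_mem h

lemma gg_min {p m δ k τ' : ℕ} {mcard : ℕ → ℕ} {pmap : ℕ → ℕ → ℕ} {i γ : ℕ}
    (hγ : γ ∈ Finset.Icc 1 (mcard (bb p m δ k τ' mcard pmap i)))
    (hD : pmap (bb p m δ k τ' mcard pmap i) γ ∈ Dset p m δ τ' i) :
    gg p m δ k τ' mcard pmap i ≤ γ :=
  Nat.sInf_le ⟨hγ, hD⟩

end SZ

namespace SZ
section sums
variable {q : ℕ}

/-- linear part difference invariance -/
lemma sumlin {p : ℕ} {i j i' j' : ℕ} {s : Finset ℕ} (w : ℕ → ZMod q) (pos : ℕ → ℕ)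
    (hpos : ∀ x ∈ s, 1 ≤ pos x)
    (hd : ∀ l, 1 ≤ l → (dig p i' l : ZMod q) - dig p j' l = (dig p i l : ZMod q) - dig p j l) :
    (∑ x ∈ s, w x * (dig p i' (pos x) : ZMod q)) - ∑ x ∈ s, w x * (dig p j' (pos x) : ZMod q)
    = (∑ x ∈ s, w x * (dig p i (pos x) : ZMod q))
      - ∑ x ∈ s, w x * (dig p j (pos x) : ZMod q) := by
  rw [← Finset.sum_sub_distrib, ← Finset.sum_sub_distrib]
  refine Finset.sum_congr rfl (fun x hx => ?_)
  have h := hd (pos x) (hpos x hx)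
  linear_combination w x * h

/-- quadratic part difference: exactly one term contributes -/
lemma sumquad {p k : ℕ} {mcard : ℕ → ℕ} {pmap : ℕ → ℕ → ℕ}
    {i j i' j' u β₀ γ₀ c' b : ℕ}
    (hne : ∀ l, 1 ≤ l → l ≠ u → dig p i' l = dig p i l ∧ dig p j' l = dig p j l)
    (hui' : dig p i' u = c') (huj' : dig p j' u = c') (hui : dig p i u = b)
    (huj : dig p j u = b)
    (huniq : ∀ β ∈ Finset.Icc 1 k, ∀ γ ∈ Finset.Icc 1 (mcard β),
      pmap β γ = u → β = β₀ ∧ γ = γ₀ - 1)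
    (hβ₀ : β₀ ∈ Finset.Icc 1 k) (hγ₀2 : 2 ≤ γ₀) (hγ₀m : γ₀ ≤ mcard β₀)
    (hu : pmap β₀ (γ₀ - 1) = u)
    (hprev : ∀ γ, 1 ≤ γ → γ < γ₀ → dig p i (pmap β₀ γ) = dig p j (pmap β₀ γ))
    (hpos : ∀ β ∈ Finset.Icc 1 k, ∀ γ ∈ Finset.Icc 1 (mcard β), 1 ≤ pmap β γ) :
    (∑ β ∈ Finset.Icc 1 k, ∑ γ ∈ Finset.Icc 1 (mcard β - 1),
        (dig p i' (pmap β γ) : ZMod q) * (dig p i' (pmap β (γ + 1)) : ZMod q))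
      - (∑ β ∈ Finset.Icc 1 k, ∑ γ ∈ Finset.Icc 1 (mcard β - 1),
        (dig p j' (pmap β γ) : ZMod q) * (dig p j' (pmap β (γ + 1)) : ZMod q))
    = (∑ β ∈ Finset.Icc 1 k, ∑ γ ∈ Finset.Icc 1 (mcard β - 1),
        (dig p i (pmap β γ) : ZMod q) * (dig p i (pmap β (γ + 1)) : ZMod q))
      - (∑ β ∈ Finset.Icc 1 k, ∑ γ ∈ Finset.Icc 1 (mcard β - 1),
        (dig p j (pmap β γ) : ZMod q) * (dig p j (pmap β (γ + 1)) : ZMod q))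
      + ((c' : ZMod q) - (b : ZMod q)) *
        ((dig p i (pmap β₀ γ₀) : ZMod q) - (dig p j (pmap β₀ γ₀) : ZMod q)) := by
  have hnxtu : pmap β₀ γ₀ ≠ u := by
    intro h
    have := huniq β₀ hβ₀ γ₀ (Finset.mem_Icc.mpr ⟨by omega, hγ₀m⟩) h
    omega
  have key : ∑ β ∈ Finset.Icc 1 k, ∑ γ ∈ Finset.Icc 1 (mcard β - 1),
      ((dig p i' (pmap β γ) : ZMod q) * (dig p i' (pmap β (γ + 1)) : ZMod q)
        - (dig p j' (pmap β γ) : ZMod q) * (dig p j' (pmap β (γ + 1)) : ZMod q)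
        - (dig p i (pmap β γ) : ZMod q) * (dig p i (pmap β (γ + 1)) : ZMod q)
        + (dig p j (pmap β γ) : ZMod q) * (dig p j (pmap β (γ + 1)) : ZMod q))
      = ((c' : ZMod q) - (b : ZMod q)) *
        ((dig p i (pmap β₀ γ₀) : ZMod q) - (dig p j (pmap β₀ γ₀) : ZMod q)) := by
    rw [Finset.sum_eq_single_of_mem β₀ hβ₀]
    · rw [Finset.sum_eq_single_of_mem (γ₀ - 1)
        (Finset.mem_Icc.mpr ⟨by omega, by omega⟩)]
      · have hg1 : γ₀ - 1 + 1 = γ₀ := by omega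
        rw [hg1, hu]
        have h2 := hne (pmap β₀ γ₀) (hpos β₀ hβ₀ γ₀ (Finset.mem_Icc.mpr ⟨by omega, hγ₀m⟩)) hnxtu
        rw [hui', huj', hui, huj, h2.1, h2.2]
        ring
      · -- other γ in the β₀ chain
        intro γ hγmem hγne
        have hγIcc := Finset.mem_Icc.mp hγmem
        have hγ1 : γ ∈ Finset.Icc 1 (mcard β₀) := Finset.mem_Icc.mpr ⟨hγIcc.1, by omega⟩
        have hγ2 : γ + 1 ∈ Finset.Icc 1 (mcard β₀) := Finset.mem_Icc.mpr ⟨by omega, by omega⟩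
        have hfst : pmap β₀ γ ≠ u := by
          intro h
          have := huniq β₀ hβ₀ γ hγ1 h
          omega
        have e1 := hne (pmap β₀ γ) (hpos β₀ hβ₀ γ hγ1) hfst
        by_cases hsnd : pmap β₀ (γ + 1) = u
        · -- γ + 1 = γ₀ - 1, so γ < γ₀ and γ+1 < γ₀: both digits agree between i and j
          have hco := huniq β₀ hβ₀ (γ + 1) hγ2 hsnd
          have hpe : dig p i (pmap β₀ γ) = dig p j (pmap β₀ γ) :=
            hprev γ (by omega) (by omega)
          rw [e1.1, e1.2, hsnd, hui', huj', hui, huj, hpe]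
          ring
        · have e2 := hne (pmap β₀ (γ + 1)) (hpos β₀ hβ₀ (γ + 1) hγ2) hsnd
          rw [e1.1, e1.2, e2.1, e2.2]
          ring
    · -- other chains: no position equals u
      intro β hβmem hβne
      apply Finset.sum_eq_zero
      intro γ hγmem
      have hγIcc := Finset.mem_Icc.mp hγmem
      have hγ1 : γ ∈ Finset.Icc 1 (mcard β) := Finset.mem_Icc.mpr ⟨hγIcc.1, by omega⟩
      have hγ2 : γ + 1 ∈ Finset.Icc 1 (mcard β) := Finset.mem_Icc.mpr ⟨by omega, by omega⟩
      have hfst : pmap β γ ≠ u := by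
        intro h; exact hβne (huniq β hβmem γ hγ1 h).1
      have hsnd : pmap β (γ + 1) ≠ u := by
        intro h; exact hβne (huniq β hβmem (γ + 1) hγ2 h).1
      have e1 := hne (pmap β γ) (hpos β hβmem γ hγ1) hfst
      have e2 := hne (pmap β (γ + 1)) (hpos β hβmem (γ + 1) hγ2) hsnd
      rw [e1.1, e1.2, e2.1, e2.2]
      ring
  have split : ∑ β ∈ Finset.Icc 1 k, ∑ γ ∈ Finset.Icc 1 (mcard β - 1),
      ((dig p i' (pmap β γ) : ZMod q) * (dig p i' (pmap β (γ + 1)) : ZMod q)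
        - (dig p j' (pmap β γ) : ZMod q) * (dig p j' (pmap β (γ + 1)) : ZMod q)
        - (dig p i (pmap β γ) : ZMod q) * (dig p i (pmap β (γ + 1)) : ZMod q)
        + (dig p j (pmap β γ) : ZMod q) * (dig p j (pmap β (γ + 1)) : ZMod q))
      = (∑ β ∈ Finset.Icc 1 k, ∑ γ ∈ Finset.Icc 1 (mcard β - 1),
        (dig p i' (pmap β γ) : ZMod q) * (dig p i' (pmap β (γ + 1)) : ZMod q))
      - (∑ β ∈ Finset.Icc 1 k, ∑ γ ∈ Finset.Icc 1 (mcard β - 1),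
        (dig p j' (pmap β γ) : ZMod q) * (dig p j' (pmap β (γ + 1)) : ZMod q))
      - (∑ β ∈ Finset.Icc 1 k, ∑ γ ∈ Finset.Icc 1 (mcard β - 1),
        (dig p i (pmap β γ) : ZMod q) * (dig p i (pmap β (γ + 1)) : ZMod q))
      + (∑ β ∈ Finset.Icc 1 k, ∑ γ ∈ Finset.Icc 1 (mcard β - 1),
        (dig p j (pmap β γ) : ZMod q) * (dig p j (pmap β (γ + 1)) : ZMod q)) := by
    simp only [← Finset.sum_sub_distrib, ← Finset.sum_add_distrib]
  linear_combination key - split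

end sums
end SZ

def aseq (p q m δ k : ℕ) (mcard : ℕ → ℕ) (pmap : ℕ → ℕ → ℕ) (lam : ℕ → ZMod q)
    (t σ r : ℕ) : ZMod q :=
  (((q / p) * ∑ β ∈ Finset.Icc 1 k, ∑ γ ∈ Finset.Icc 1 (mcard β - 1),
      dig p r (pmap β γ) * dig p r (pmap β (γ + 1)) : ℕ) : ZMod q)
  + ∑ l ∈ Finset.Icc 1 m, lam l * (dig p r l : ZMod q) + lam 0
  + (((q / p) * (∑ β ∈ Finset.Icc 1 k, dig p σ β * dig p r (pmap β 1)
      + ∑ β ∈ Finset.Icc 1 k, dig p t β * dig p r (pmap β (mcard β))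
      + ∑ β ∈ Finset.Icc 1 δ, dig p t (k + β) * dig p r (m - δ + β)) : ℕ) : ZMod q)

namespace SZ

noncomputable def DD (p q m δ k τ' : ℕ) (mcard : ℕ → ℕ) (pmap : ℕ → ℕ → ℕ) (i : ℕ) : ZMod q :=
  (dig p i (nxt p m δ k τ' mcard pmap i) : ZMod q)
    - (dig p (i + τ') (nxt p m δ k τ' mcard pmap i) : ZMod q)

noncomputable def EE (p q m δ k τ' : ℕ) (mcard : ℕ → ℕ) (pmap : ℕ → ℕ → ℕ)
    (lam : ℕ → ZMod q) (t : ℕ) (z : ℕ × ℕ) : ZMod q :=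
  aseq p q m δ k mcard pmap lam t z.1 z.2 - aseq p q m δ k mcard pmap lam t z.1 (z.2 + τ')

lemma step {p q m δ k τ' : ℕ} {mcard : ℕ → ℕ} {pmap : ℕ → ℕ → ℕ} {lam : ℕ → ZMod q} {t : ℕ}
    (hp2 : 2 ≤ p) (hq : q ≠ 0) (hpq : p ∣ q) (hτd : ¬ p ^ (m - δ) ∣ τ')
    (hmcard : ∀ β ∈ Finset.Icc 1 k, 1 ≤ mcard β)
    (hmaps : ∀ β ∈ Finset.Icc 1 k, ∀ γ ∈ Finset.Icc 1 (mcard β),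
      pmap β γ ∈ Finset.Icc 1 (m - δ))
    (hpart : ∀ l ∈ Finset.Icc 1 (m - δ), ∃! bg : ℕ × ℕ,
      bg.1 ∈ Finset.Icc 1 k ∧ bg.2 ∈ Finset.Icc 1 (mcard bg.1) ∧ pmap bg.1 bg.2 = l)
    (σ i : ℕ) (hz1 : σ < p ^ k) (hz2 : i + τ' < p ^ m) :
    (rho p m δ k τ' mcard pmap (σ, i)).1 < p ^ k ∧
    (rho p m δ k τ' mcard pmap (σ, i)).2 + τ' < p ^ m ∧
    Dset p m δ τ' (rho p m δ k τ' mcard pmap (σ, i)).2 = Dset p m δ τ' i ∧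
    dig p (rho p m δ k τ' mcard pmap (σ, i)).2 (nxt p m δ k τ' mcard pmap i)
      = dig p i (nxt p m δ k τ' mcard pmap i) ∧
    dig p ((rho p m δ k τ' mcard pmap (σ, i)).2 + τ') (nxt p m δ k τ' mcard pmap i)
      = dig p (i + τ') (nxt p m δ k τ' mcard pmap i) ∧
    EE p q m δ k τ' mcard pmap lam t (rho p m δ k τ' mcard pmap (σ, i))
      = EE p q m δ k τ' mcard pmap lam t (σ, i)
        + ((q / p : ℕ) : ZMod q) * DD p q m δ k τ' mcard pmap i := by
  obtain ⟨hβ₀mem, -⟩ := bb_mem (p := p) (m := m) (δ := δ) (k := k) (τ' := τ')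
    (mcard := mcard) (pmap := pmap) (i := i) hτd hpart
  obtain ⟨hγ₀mem, hnxtD⟩ := gg_mem (p := p) (m := m) (δ := δ) (k := k) (τ' := τ')
    (mcard := mcard) (pmap := pmap) (i := i) hτd hpart
  set β₀ := bb p m δ k τ' mcard pmap i with hβ₀def
  set γ₀ := gg p m δ k τ' mcard pmap i with hγ₀def
  have hβ₀Icc := Finset.mem_Icc.mp hβ₀mem
  have hγ₀Icc := Finset.mem_Icc.mp hγ₀mem
  have hnxtIcc : pmap β₀ γ₀ ∈ Finset.Icc 1 (m - δ) :=
    hmaps β₀ hβ₀mem γ₀ hγ₀mem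
  have hnxtne : dig p i (pmap β₀ γ₀) ≠ dig p (i + τ') (pmap β₀ γ₀) :=
    (Finset.mem_filter.mp hnxtD).2
  have hnxt1 : 1 ≤ pmap β₀ γ₀ := (Finset.mem_Icc.mp hnxtIcc).1
  have hnxtdef : nxt p m δ k τ' mcard pmap i = pmap β₀ γ₀ := rfl
  have hDDdef : DD p q m δ k τ' mcard pmap i
      = (dig p i (pmap β₀ γ₀) : ZMod q) - (dig p (i + τ') (pmap β₀ γ₀) : ZMod q) := rfl
  by_cases hg1 : γ₀ = 1
  · -- change a digit of σ
    set b := dig p σ β₀ with hbdef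
    set c' := (b + 1) % p with hc'def
    have hb : b < p := dig_lt hp2 σ β₀
    have hc' : c' < p := Nat.mod_lt _ (by omega)
    have hrho : rho p m δ k τ' mcard pmap (σ, i) = (setd p β₀ c' σ, i) := by
      simp only [rho]
      rw [if_pos hg1]
    rw [hrho]
    refine ⟨setd_lt hp2 hβ₀Icc.1 hβ₀Icc.2 hz1 hc', hz2, rfl, rfl, rfl, ?_⟩
    -- now the exponent identity
    have hσu : dig p (setd p β₀ c' σ) β₀ = c' := setd_dig_self hp2 hβ₀Icc.1 hc' σ
    have hσd : ∀ β, 1 ≤ β → β ≠ β₀ → dig p (setd p β₀ c' σ) β = dig p σ β :=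
      fun β h1 h2 => setd_dig_ne hp2 hβ₀Icc.1 h1 h2 hc' σ
    have key : ∀ r : ℕ,
        ∑ β ∈ Finset.Icc 1 k, (dig p (setd p β₀ c' σ) β : ZMod q) * (dig p r (pmap β 1) : ZMod q)
        = (∑ β ∈ Finset.Icc 1 k, (dig p σ β : ZMod q) * (dig p r (pmap β 1) : ZMod q))
          + ((c' : ZMod q) - (b : ZMod q)) * (dig p r (pmap β₀ 1) : ZMod q) := by
      intro r
      have keyd : ∑ β ∈ Finset.Icc 1 k,
          ((dig p (setd p β₀ c' σ) β : ZMod q) * (dig p r (pmap β 1) : ZMod q)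
            - (dig p σ β : ZMod q) * (dig p r (pmap β 1) : ZMod q))
          = ((c' : ZMod q) - (b : ZMod q)) * (dig p r (pmap β₀ 1) : ZMod q) := by
        rw [Finset.sum_eq_single_of_mem β₀ hβ₀mem]
        · rw [hσu]; ring
        · intro β hβm hβne
          have h1 := (Finset.mem_Icc.mp hβm).1
          rw [hσd β h1 hβne]; ring
      rw [Finset.sum_sub_distrib] at keyd
      linear_combination keyd
    have hincr : ((q / p : ℕ) : ZMod q) * (c' : ZMod q)
        = ((q / p : ℕ) : ZMod q) * (b : ZMod q) + ((q / p : ℕ) : ZMod q) := by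
      rw [hc'def]; exact incr hp2 hq hpq hb
    simp only [EE, aseq, hDDdef]
    push_cast
    rw [hg1] at *
    linear_combination ((q / p : ℕ) : ZMod q) * key i - ((q / p : ℕ) : ZMod q) * key (i + τ')
      + hincr * ((dig p i (pmap β₀ 1) : ZMod q) - (dig p (i + τ') (pmap β₀ 1) : ZMod q))
  · -- change a digit of i (and hence of i + τ')
    have hg2 : 2 ≤ γ₀ := by omega
    set u := pmap β₀ (γ₀ - 1) with hudef
    have hγ₀1mem : γ₀ - 1 ∈ Finset.Icc 1 (mcard β₀) := Finset.mem_Icc.mpr ⟨by omega, by omega⟩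
    have huIcc : u ∈ Finset.Icc 1 (m - δ) := hmaps β₀ hβ₀mem (γ₀ - 1) hγ₀1mem
    have huIcc' := Finset.mem_Icc.mp huIcc
    have hu1 : 1 ≤ u := huIcc'.1
    have hum : u ≤ m := by
      have : m - δ ≤ m := Nat.sub_le m δ
      omega
    set b := dig p i u with hbdef
    set c' := (b + 1) % p with hc'def
    have hb : b < p := dig_lt hp2 i u
    have hc' : c' < p := Nat.mod_lt _ (by omega)
    have hudig : dig p i u = dig p (i + τ') u := by
      by_contra hne
      have hmem : u ∈ Dset p m δ τ' i := Finset.mem_filter.mpr ⟨huIcc, hne⟩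
      have hle := gg_min (p := p) (m := m) (δ := δ) (k := k) (τ' := τ')
        (mcard := mcard) (pmap := pmap) (i := i) hγ₀1mem hmem
      omega
    have hrho : rho p m δ k τ' mcard pmap (σ, i) = (σ, setd p u c' i) := by
      simp only [rho]
      rw [if_neg hg1]
    rw [hrho]
    have hKEYJ : setd p u c' i + τ' = setd p u c' (i + τ') := by
      have h1 := setd_cast (p := p) hu1 i c'
      have h2 := setd_cast (p := p) hu1 (i + τ') c'
      rw [← hudig] at h2
      have h12 : (setd p u c' i : ℤ) + (τ' : ℤ) = (setd p u c' (i + τ') : ℤ) := by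
        rw [h1, h2]; push_cast; ring
      exact_mod_cast h12
    have hnxtu : pmap β₀ γ₀ ≠ u := by
      intro h
      rw [hudef] at h
      have := coords_uniq hpart hmaps hβ₀mem hγ₀mem hβ₀mem hγ₀1mem h
      omega
    refine ⟨hz1, ?_, ?_, ?_, ?_, ?_⟩
    · show setd p u c' i + τ' < p ^ m
      rw [hKEYJ]
      exact setd_lt hp2 hu1 (by omega) hz2 hc'
    · -- Dset invariance
      show Dset p m δ τ' (setd p u c' i) = Dset p m δ τ' i
      unfold Dset
      apply Finset.filter_congr
      intro l hl
      have hl1 : 1 ≤ l := (Finset.mem_Icc.mp hl).1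
      rw [hKEYJ]
      by_cases hlu : l = u
      · subst hlu
        rw [setd_dig_self hp2 hu1 hc', setd_dig_self hp2 hu1 hc']
        simp [hudig]
      · rw [setd_dig_ne hp2 hu1 hl1 hlu hc', setd_dig_ne hp2 hu1 hl1 hlu hc']
    · show dig p (setd p u c' i) (nxt p m δ k τ' mcard pmap i)
        = dig p i (nxt p m δ k τ' mcard pmap i)
      rw [hnxtdef]
      exact setd_dig_ne hp2 hu1 hnxt1 hnxtu hc' i
    · show dig p (setd p u c' i + τ') (nxt p m δ k τ' mcard pmap i)
        = dig p (i + τ') (nxt p m δ k τ' mcard pmap i)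
      rw [hnxtdef, hKEYJ]
      exact setd_dig_ne hp2 hu1 hnxt1 hnxtu hc' (i + τ')
    · -- the exponent identity
      have hne : ∀ l, 1 ≤ l → l ≠ u →
          dig p (setd p u c' i) l = dig p i l ∧
          dig p (setd p u c' (i + τ')) l = dig p (i + τ') l :=
        fun l h1 h2 => ⟨setd_dig_ne hp2 hu1 h1 h2 hc' i,
          setd_dig_ne hp2 hu1 h1 h2 hc' (i + τ')⟩
      have hd : ∀ l, 1 ≤ l →
          (dig p (setd p u c' i) l : ZMod q) - dig p (setd p u c' (i + τ')) l
          = (dig p i l : ZMod q) - dig p (i + τ') l := by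
        intro l h1
        by_cases hlu : l = u
        · subst hlu
          rw [setd_dig_self hp2 hu1 hc', setd_dig_self hp2 hu1 hc', hudig]
          ring
        · rw [(hne l h1 hlu).1, (hne l h1 hlu).2]
      have huniq' : ∀ β ∈ Finset.Icc 1 k, ∀ γ ∈ Finset.Icc 1 (mcard β),
          pmap β γ = u → β = β₀ ∧ γ = γ₀ - 1 := by
        intro β hβ γ hγ h
        rw [hudef] at h
        exact coords_uniq hpart hmaps hβ hγ hβ₀mem hγ₀1mem h
      have hprev : ∀ γ, 1 ≤ γ → γ < γ₀ →
          dig p i (pmap β₀ γ) = dig p (i + τ') (pmap β₀ γ) := by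
        intro γ h1 h2
        by_contra hcon
        have hγmem : γ ∈ Finset.Icc 1 (mcard β₀) := Finset.mem_Icc.mpr ⟨h1, by omega⟩
        have hmem : pmap β₀ γ ∈ Dset p m δ τ' i :=
          Finset.mem_filter.mpr ⟨hmaps β₀ hβ₀mem γ hγmem, hcon⟩
        have hle := gg_min (p := p) (m := m) (δ := δ) (k := k) (τ' := τ')
          (mcard := mcard) (pmap := pmap) (i := i) hγmem hmem
        omega
      have hquad := sumquad (q := q) (k := k) (mcard := mcard) (pmap := pmap)
        (i := i) (j := i + τ') hne (setd_dig_self hp2 hu1 hc' i)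
        (setd_dig_self hp2 hu1 hc' (i + τ')) hbdef.symm (hudig.symm.trans hbdef.symm)
        huniq' hβ₀mem hg2 hγ₀Icc.2 hudef.symm hprev
        (fun β hβ γ hγ => (Finset.mem_Icc.mp (hmaps β hβ γ hγ)).1)
      have hlin := sumlin (q := q) (p := p) (i := i) (j := i + τ')
        (i' := setd p u c' i) (j' := setd p u c' (i + τ')) (s := Finset.Icc 1 m)
        lam (fun l => l) (fun x hx => (Finset.mem_Icc.mp hx).1) hd
      have hs1 := sumlin (q := q) (p := p) (i := i) (j := i + τ')
        (i' := setd p u c' i) (j' := setd p u c' (i + τ')) (s := Finset.Icc 1 k)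
        (fun β => (dig p σ β : ZMod q)) (fun β => pmap β 1)
        (fun β hβ => (Finset.mem_Icc.mp
          (hmaps β hβ 1 (Finset.mem_Icc.mpr ⟨le_rfl, hmcard β hβ⟩))).1) hd
      have hs2 := sumlin (q := q) (p := p) (i := i) (j := i + τ')
        (i' := setd p u c' i) (j' := setd p u c' (i + τ')) (s := Finset.Icc 1 k)
        (fun β => (dig p t β : ZMod q)) (fun β => pmap β (mcard β))
        (fun β hβ => (Finset.mem_Icc.mp
          (hmaps β hβ (mcard β) (Finset.mem_Icc.mpr ⟨hmcard β hβ, le_rfl⟩))).1) hd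
      have hs3 := sumlin (q := q) (p := p) (i := i) (j := i + τ')
        (i' := setd p u c' i) (j' := setd p u c' (i + τ')) (s := Finset.Icc 1 δ)
        (fun β => (dig p t (k + β) : ZMod q)) (fun β => m - δ + β)
        (fun β hβ => by
          have h1 := (Finset.mem_Icc.mp hβ).1
          show 1 ≤ m - δ + β
          omega) hd
      have hincr : ((q / p : ℕ) : ZMod q) * (c' : ZMod q)
          = ((q / p : ℕ) : ZMod q) * (b : ZMod q) + ((q / p : ℕ) : ZMod q) := by
        rw [hc'def]; exact incr hp2 hq hpq hb
      simp only [EE, aseq, hDDdef]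
      rw [hKEYJ]
      push_cast
      linear_combination ((q / p : ℕ) : ZMod q) * hquad + hlin
        + ((q / p : ℕ) : ZMod q) * hs1 + ((q / p : ℕ) : ZMod q) * hs2
        + ((q / p : ℕ) : ZMod q) * hs3
        + hincr * ((dig p i (pmap β₀ γ₀) : ZMod q) - (dig p (i + τ') (pmap β₀ γ₀) : ZMod q))

end SZ

namespace SZ

lemma setd_incr_inj {p L u a a' : ℕ} (hp2 : 2 ≤ p) (hu : 1 ≤ u) (huL : u ≤ L)
    (ha : a < p ^ L) (ha' : a' < p ^ L)
    (h : setd p u ((dig p a u + 1) % p) a = setd p u ((dig p a' u + 1) % p) a') : a = a' := by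
  have hca : (dig p a u + 1) % p < p := Nat.mod_lt _ (by omega)
  have hca' : (dig p a' u + 1) % p < p := Nat.mod_lt _ (by omega)
  have hba : dig p a u < p := dig_lt hp2 a u
  have hba' : dig p a' u < p := dig_lt hp2 a' u
  have hdigs : ∀ l, 1 ≤ l → l ≤ L → dig p a l = dig p a' l := by
    intro l h1 h2
    by_cases hlu : l = u
    · subst hlu
      have e1 : dig p (setd p l ((dig p a l + 1) % p) a) l = (dig p a l + 1) % p :=
        setd_dig_self hp2 h1 hca a
      have e2 : dig p (setd p l ((dig p a' l + 1) % p) a') l = (dig p a' l + 1) % p :=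
        setd_dig_self hp2 h1 hca' a'
      have e3 : (dig p a l + 1) % p = (dig p a' l + 1) % p := by rw [← e1, ← e2, h]
      rcases Nat.lt_or_ge (dig p a l + 1) p with h4 | h4 <;>
        rcases Nat.lt_or_ge (dig p a' l + 1) p with h5 | h5
      · rw [Nat.mod_eq_of_lt h4, Nat.mod_eq_of_lt h5] at e3; omega
      · have : dig p a' l + 1 = p := by omega
        rw [Nat.mod_eq_of_lt h4, this, Nat.mod_self] at e3; omega
      · have : dig p a l + 1 = p := by omega
        rw [this, Nat.mod_self, Nat.mod_eq_of_lt h5] at e3; omega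
      · omega
    · have e1 : dig p (setd p u ((dig p a u + 1) % p) a) l = dig p a l :=
        setd_dig_ne hp2 hu h1 hlu hca a
      have e2 : dig p (setd p u ((dig p a' u + 1) % p) a') l = dig p a' l :=
        setd_dig_ne hp2 hu h1 hlu hca' a'
      rw [← e1, ← e2, h]
  have hmod := mod_eq_of_digs_eq (p := p) L hdigs
  rwa [Nat.mod_eq_of_lt ha, Nat.mod_eq_of_lt ha'] at hmod

lemma main {p q m δ k τ' : ℕ} {mcard : ℕ → ℕ} {pmap : ℕ → ℕ → ℕ} {lam : ℕ → ZMod q} {t : ℕ}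
    (hp2 : 2 ≤ p) (hq : q ≠ 0) (hpq : p ∣ q) (hτd : ¬ p ^ (m - δ) ∣ τ')
    (hmcard : ∀ β ∈ Finset.Icc 1 k, 1 ≤ mcard β)
    (hmaps : ∀ β ∈ Finset.Icc 1 k, ∀ γ ∈ Finset.Icc 1 (mcard β),
      pmap β γ ∈ Finset.Icc 1 (m - δ))
    (hpart : ∀ l ∈ Finset.Icc 1 (m - δ), ∃! bg : ℕ × ℕ,
      bg.1 ∈ Finset.Icc 1 k ∧ bg.2 ∈ Finset.Icc 1 (mcard bg.1) ∧ pmap bg.1 bg.2 = l) :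
    ∑ σ ∈ Finset.range (p ^ k), ∑ i ∈ Finset.range (p ^ m - τ'),
      eomega q (aseq p q m δ k mcard pmap lam t σ i
        - aseq p q m δ k mcard pmap lam t σ (i + τ')) = 0 := by
  haveI : NeZero q := ⟨hq⟩
  rw [← Finset.sum_product']
  have hstep := fun (σ i : ℕ) (h1 : σ < p ^ k) (h2 : i + τ' < p ^ m) =>
    step (lam := lam) (t := t) hp2 hq hpq hτd hmcard hmaps hpart σ i h1 h2
  refine orbit_cancel _ (fun z => eomega q (EE p q m δ k τ' mcard pmap lam t z)) p
    (by omega) (rho p m δ k τ' mcard pmap) ?_ ?_ ?_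
  · -- maps to
    rintro ⟨σ, i⟩ hz
    rw [Finset.mem_product] at hz ⊢
    have h1 := Finset.mem_range.mp hz.1
    have h2 : i + τ' < p ^ m := by have := Finset.mem_range.mp hz.2; omega
    obtain ⟨c1, c2, -⟩ := hstep σ i h1 h2
    exact ⟨Finset.mem_range.mpr c1, Finset.mem_range.mpr (by omega)⟩
  · -- injective
    rintro ⟨σ, i⟩ hz ⟨σ', i'⟩ hz' hzz
    simp only [Finset.coe_product, Set.mem_prod, Finset.mem_coe, Finset.mem_range] at hz hz'
    have h2 : i + τ' < p ^ m := by omega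
    have h2' : i' + τ' < p ^ m := by omega
    obtain ⟨-, -, c3, -, -, -⟩ := hstep σ i hz.1 h2
    obtain ⟨-, -, c3', -, -, -⟩ := hstep σ' i' hz'.1 h2'
    have hDeq : Dset p m δ τ' i = Dset p m δ τ' i' := by
      rw [← c3, ← c3', hzz]
    have hbbeq : bb p m δ k τ' mcard pmap i = bb p m δ k τ' mcard pmap i' := by
      rw [bb_congr hDeq.symm]
    have hggeq : gg p m δ k τ' mcard pmap i = gg p m δ k τ' mcard pmap i' := by
      rw [gg_congr hDeq.symm]
    obtain ⟨hβmem, -⟩ := bb_mem (p := p) (m := m) (δ := δ) (k := k) (τ' := τ')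
      (mcard := mcard) (pmap := pmap) (i := i) hτd hpart
    obtain ⟨hγmem, -⟩ := gg_mem (p := p) (m := m) (δ := δ) (k := k) (τ' := τ')
      (mcard := mcard) (pmap := pmap) (i := i) hτd hpart
    have hβIcc := Finset.mem_Icc.mp hβmem
    have hγIcc := Finset.mem_Icc.mp hγmem
    by_cases hcase : gg p m δ k τ' mcard pmap i = 1
    · have hcase' : gg p m δ k τ' mcard pmap i' = 1 := by rw [← hggeq]; exact hcase
      have hr : rho p m δ k τ' mcard pmap (σ, i)
          = (setd p (bb p m δ k τ' mcard pmap i)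
              ((dig p σ (bb p m δ k τ' mcard pmap i) + 1) % p) σ, i) := by
        simp only [rho]; rw [if_pos hcase]
      have hr' : rho p m δ k τ' mcard pmap (σ', i')
          = (setd p (bb p m δ k τ' mcard pmap i')
              ((dig p σ' (bb p m δ k τ' mcard pmap i') + 1) % p) σ', i') := by
        simp only [rho]; rw [if_pos hcase']
      rw [hr, hr'] at hzz
      have hii : i = i' := congrArg Prod.snd hzz
      have hσσ : σ = σ' := by
        have h1 := congrArg Prod.fst hzz
        simp only at h1
        rw [← hbbeq] at h1
        exact setd_incr_inj hp2 hβIcc.1 hβIcc.2 hz.1 hz'.1 h1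
      rw [hσσ, hii]
    · have hcase' : ¬ gg p m δ k τ' mcard pmap i' = 1 := by rw [← hggeq]; exact hcase
      have hr : rho p m δ k τ' mcard pmap (σ, i)
          = (σ, setd p (pmap (bb p m δ k τ' mcard pmap i) (gg p m δ k τ' mcard pmap i - 1))
              ((dig p i (pmap (bb p m δ k τ' mcard pmap i)
                (gg p m δ k τ' mcard pmap i - 1)) + 1) % p) i) := by
        simp only [rho]; rw [if_neg hcase]
      have hr' : rho p m δ k τ' mcard pmap (σ', i')
          = (σ', setd p (pmap (bb p m δ k τ' mcard pmap i') (gg p m δ k τ' mcard pmap i' - 1))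
              ((dig p i' (pmap (bb p m δ k τ' mcard pmap i')
                (gg p m δ k τ' mcard pmap i' - 1)) + 1) % p) i') := by
        simp only [rho]; rw [if_neg hcase']
      rw [hr, hr'] at hzz
      have hσσ : σ = σ' := congrArg Prod.fst hzz
      have huIcc := Finset.mem_Icc.mp (hmaps _ hβmem (gg p m δ k τ' mcard pmap i - 1)
        (Finset.mem_Icc.mpr ⟨by omega, by omega⟩))
      have hii : i = i' := by
        have h1 := congrArg Prod.snd hzz
        simp only at h1
        rw [← hbbeq, ← hggeq] at h1
        exact setd_incr_inj (L := m) hp2 huIcc.1 (by omega)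
          (by omega : i < p ^ m) (by omega : i' < p ^ m) h1
      rw [hσσ, hii]
  · -- orbit sums vanish
    rintro ⟨σ, i⟩ hz
    rw [Finset.mem_product] at hz
    have h1 := Finset.mem_range.mp hz.1
    have h2 : i + τ' < p ^ m := by have := Finset.mem_range.mp hz.2; omega
    set x : ZMod q := ((q / p : ℕ) : ZMod q) * DD p q m δ k τ' mcard pmap i with hxdef
    have hinv : ∀ c : ℕ,
        (rho p m δ k τ' mcard pmap)^[c] (σ, i) ∈
          Finset.range (p ^ k) ×ˢ Finset.range (p ^ m - τ') ∧
        DD p q m δ k τ' mcard pmap ((rho p m δ k τ' mcard pmap)^[c] (σ, i)).2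
          = DD p q m δ k τ' mcard pmap i ∧
        EE p q m δ k τ' mcard pmap lam t ((rho p m δ k τ' mcard pmap)^[c] (σ, i))
          = EE p q m δ k τ' mcard pmap lam t (σ, i) + c • x := by
      intro c
      induction c with
      | zero =>
        refine ⟨?_, rfl, by simp⟩
        rw [Function.iterate_zero_apply]
        exact Finset.mem_product.mpr hz
      | succ c ih =>
        obtain ⟨ihT, ihD, ihE⟩ := ih
        set w := (rho p m δ k τ' mcard pmap)^[c] (σ, i) with hwdef
        have hwT := Finset.mem_product.mp ihT
        have hw1 := Finset.mem_range.mp hwT.1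
        have hw2 : w.2 + τ' < p ^ m := by have := Finset.mem_range.mp hwT.2; omega
        obtain ⟨c1, c2, c3, c4, c5, c6⟩ := hstep w.1 w.2 hw1 hw2
        have hwmk : (w.1, w.2) = w := rfl
        rw [hwmk] at c1 c2 c3 c4 c5 c6
        have hiter : (rho p m δ k τ' mcard pmap)^[c + 1] (σ, i)
            = rho p m δ k τ' mcard pmap w := by
          rw [Function.iterate_succ_apply', hwdef]
        have hDD : DD p q m δ k τ' mcard pmap (rho p m δ k τ' mcard pmap w).2
            = DD p q m δ k τ' mcard pmap w.2 := by
          unfold DD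
          rw [nxt_congr c3, c4, c5]
        refine ⟨?_, ?_, ?_⟩
        · rw [hiter]
          exact Finset.mem_product.mpr
            ⟨Finset.mem_range.mpr c1, Finset.mem_range.mpr (by omega)⟩
        · rw [hiter, hDD, ihD]
        · rw [hiter, c6, ihE, ihD, succ_nsmul, hxdef]
          ring
    have hD := DD p q m δ k τ' mcard pmap i
    obtain ⟨hγmem, hnxtD⟩ := gg_mem (p := p) (m := m) (δ := δ) (k := k) (τ' := τ')
      (mcard := mcard) (pmap := pmap) (i := i) hτd hpart
    have hnxtne : dig p i (nxt p m δ k τ' mcard pmap i)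
        ≠ dig p (i + τ') (nxt p m δ k τ' mcard pmap i) := (Finset.mem_filter.mp hnxtD).2
    have hxne : x ≠ 0 := by
      rw [hxdef]
      exact qp_mul_sub_ne_zero hp2 hq hpq (dig_lt hp2 _ _) (dig_lt hp2 _ _) hnxtne
    have hη1 : eomega q x ≠ 1 := fun h => hxne ((eomega_eq_one_iff x).mp h)
    have hηp : (eomega q x) ^ p = 1 := by
      rw [← eomega_nsmul, nsmul_eq_mul, hxdef]
      have : (p : ZMod q) * (((q / p : ℕ) : ZMod q) * DD p q m δ k τ' mcard pmap i)
          = (((q / p : ℕ) : ZMod q) * (p : ZMod q)) * DD p q m δ k τ' mcard pmap i := by ring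
      rw [this, qp_mul_p hq hpq, zero_mul, eomega_zero]
    calc ∑ c ∈ Finset.range p,
          (fun z => eomega q (EE p q m δ k τ' mcard pmap lam t z))
            ((rho p m δ k τ' mcard pmap)^[c] (σ, i))
        = ∑ c ∈ Finset.range p,
            eomega q (EE p q m δ k τ' mcard pmap lam t (σ, i)) * (eomega q x) ^ c := by
          refine Finset.sum_congr rfl (fun c _ => ?_)
          simp only
          rw [(hinv c).2.2, eomega_add, ← eomega_nsmul]
      _ = eomega q (EE p q m δ k τ' mcard pmap lam t (σ, i))
            * ∑ c ∈ Finset.range p, (eomega q x) ^ c := by rw [Finset.mul_sum]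
      _ = 0 := by rw [geom_zero hη1 hηp, mul_zero]

end SZ

noncomputable def ccorr (q N : ℕ) (u v : ℕ → ZMod q) (τ : ℤ) : ℂ :=
  if 0 ≤ τ then ∑ i ∈ Finset.range (N - τ.toNat), eomega q (u i - v (i + τ.toNat))
  else ∑ i ∈ Finset.range (N - (-τ).toNat), eomega q (u (i + (-τ).toNat) - v i)

noncomputable def acorr (q N : ℕ) (u : ℕ → ZMod q) (τ : ℤ) : ℂ := ccorr q N u u τ

/-- for every code index `t` and every shift `τ` with
`1 ≤ |τ| ≤ p^(m-δ)-1` or `p^m - p^(m-δ) + 1 ≤ |τ| ≤ p^m - 1`, the sum of the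
aperiodic autocorrelations of the sequences `a^t_σ` (over `σ = 0,…,p^k-1`) vanishes. -/
theorem szccs_aacf_zero
    (p q m δ k : ℕ) (hp : p.Prime) (hq : 0 < q) (hpq : p ∣ q)
    (hm : 3 ≤ m) (hδ : δ < m) (hk1 : 1 ≤ k) (hk2 : k ≤ m - δ)
    (mcard : ℕ → ℕ) (pmap : ℕ → ℕ → ℕ) (lam : ℕ → ZMod q)
    (hmcard : ∀ β ∈ Finset.Icc 1 k, 1 ≤ mcard β)
    (hmaps : ∀ β ∈ Finset.Icc 1 k, ∀ γ ∈ Finset.Icc 1 (mcard β),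
      pmap β γ ∈ Finset.Icc 1 (m - δ))
    (hpart : ∀ l ∈ Finset.Icc 1 (m - δ), ∃! bg : ℕ × ℕ,
      bg.1 ∈ Finset.Icc 1 k ∧ bg.2 ∈ Finset.Icc 1 (mcard bg.1) ∧ pmap bg.1 bg.2 = l)
    (t : ℕ) (ht : t < p ^ (k + δ)) (τ : ℤ)
    (hτ : (1 ≤ τ.natAbs ∧ τ.natAbs ≤ p ^ (m - δ) - 1) ∨
      (p ^ m - p ^ (m - δ) + 1 ≤ τ.natAbs ∧ τ.natAbs ≤ p ^ m - 1)) :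
    ∑ σ ∈ Finset.range (p ^ k),
      acorr q (p ^ m) (aseq p q m δ k mcard pmap lam t σ) τ = 0 := by
  haveI : NeZero q := ⟨hq.ne'⟩
  have hp2 : 2 ≤ p := hp.two_le
  have hpow_le : p ^ (m - δ) ≤ p ^ m := Nat.pow_le_pow_right (by omega) (by omega)
  have hpow_pos : 0 < p ^ (m - δ) := pow_pos (by omega) _
  have hτd : ¬ p ^ (m - δ) ∣ τ.natAbs := by
    rcases hτ with ⟨h1, h2⟩ | ⟨h1, h2⟩
    · intro hd
      have := Nat.le_of_dvd (by omega) hd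
      omega
    · intro hd
      have hdvd2 : p ^ (m - δ) ∣ p ^ m := pow_dvd_pow p (by omega)
      have hd3 : p ^ (m - δ) ∣ (τ.natAbs - (p ^ m - p ^ (m - δ))) :=
        Nat.dvd_sub hd (Nat.dvd_sub hdvd2 dvd_rfl)
      have := Nat.le_of_dvd (by omega) hd3
      omega
  rcases le_or_gt 0 τ with hτ0 | hτ0
  · have htoNat : τ.toNat = τ.natAbs := by omega
    simp only [acorr, ccorr, if_pos hτ0, htoNat]
    exact SZ.main hp2 hq.ne' hpq hτd hmcard hmaps hpart
  · have htoNat : (-τ).toNat = τ.natAbs := by omega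
    simp only [acorr, ccorr, if_neg (by omega : ¬ (0 : ℤ) ≤ τ), htoNat]
    have hmain := SZ.main (p := p) (q := q) (m := m) (δ := δ) (k := k) (τ' := τ.natAbs)
      (mcard := mcard) (pmap := pmap) (lam := lam) (t := t)
      hp2 hq.ne' hpq hτd hmcard hmaps hpart
    have hstar : ∑ σ ∈ Finset.range (p ^ k), ∑ i ∈ Finset.range (p ^ m - τ.natAbs),
        eomega q (aseq p q m δ k mcard pmap lam t σ (i + τ.natAbs)
          - aseq p q m δ k mcard pmap lam t σ i)
        = (starRingEnd ℂ) (∑ σ ∈ Finset.range (p ^ k),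
            ∑ i ∈ Finset.range (p ^ m - τ.natAbs),
            eomega q (aseq p q m δ k mcard pmap lam t σ i
              - aseq p q m δ k mcard pmap lam t σ (i + τ.natAbs))) := by
      rw [map_sum]
      refine Finset.sum_congr rfl fun σ _ => ?_
      rw [map_sum]
      refine Finset.sum_congr rfl fun i _ => ?_
      have h := SZ.eomega_star (q := q) (aseq p q m δ k mcard pmap lam t σ i
        - aseq p q m δ k mcard pmap lam t σ (i + τ.natAbs))
      rw [neg_sub] at h
      rw [starRingEnd_apply]
      exact h
    rw [hstar, hmain, map_zero]
end

section
/- Let p be a prime, q a positive integer divisible by p, m ≥ 3, 0 ≤ δ < m, and let the functions a^t_σ be defined as in the stated construction. Let t₁, t₂ ∈ {0,…,p^{k+δ}−1} and let r, s ∈ {0,…,p^m−1} have p-ary digits (r_1,…,r_m) and (s_1,…,s_m) such that r_{π_β(1)} ≠ s_{π_β(1)} for some β ∈ {1,…,k}. Then Σ_{σ=0}^{p^k−1} ω_q^{a^{t₁}_{σ,r} − a^{t₂}_{σ,s}} = 0. -/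
open Finset

lemma my_pow_mod {z : ℂ} {q : ℕ} (h : z ^ q = 1) (n : ℕ) : z ^ (n % q) = z ^ n := by
  conv_rhs => rw [← Nat.mod_add_div n q]
  rw [pow_add, pow_mul, h, one_pow, mul_one]

lemma eomega_eq_pow (q : ℕ) (x : ZMod q) :
    eomega q x = Complex.exp (2 * Real.pi * Complex.I / q) ^ x.val := by
  rw [eomega, ← Complex.exp_nat_mul]
  congr 1
  ring

lemma root_pow (q : ℕ) (hq : 0 < q) : Complex.exp (2 * Real.pi * Complex.I / q) ^ q = 1 := by
  rw [← Complex.exp_nat_mul, mul_comm, div_mul_cancel₀ _ (Nat.cast_ne_zero.mpr hq.ne' : (q:ℂ) ≠ 0)]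
  exact Complex.exp_two_pi_mul_I

lemma eomega_add (q : ℕ) [NeZero q] (x y : ZMod q) :
    eomega q (x + y) = eomega q x * eomega q y := by
  have hq : 0 < q := Nat.pos_of_ne_zero (NeZero.ne q)
  rw [eomega_eq_pow, eomega_eq_pow, eomega_eq_pow, ← pow_add, ZMod.val_add,
    my_pow_mod (root_pow q hq)]

lemma eomega_zero (q : ℕ) [NeZero q] : eomega q 0 = 1 := by
  simp [eomega]

lemma eomega_sum (q : ℕ) [NeZero q] {ι : Type*} (s : Finset ι) (f : ι → ZMod q) :
    eomega q (∑ i ∈ s, f i) = ∏ i ∈ s, eomega q (f i) := by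
  classical
  induction s using Finset.cons_induction with
  | empty => simp [eomega_zero]
  | cons a s ha ih => rw [Finset.sum_cons, Finset.prod_cons, eomega_add, ih]

lemma eomega_nat_mul (q : ℕ) [NeZero q] (n : ℕ) (c : ZMod q) :
    eomega q ((n : ZMod q) * c) = eomega q c ^ n := by
  induction n with
  | zero => simp [eomega_zero]
  | succ n ih =>
      push_cast
      rw [add_mul, one_mul, eomega_add, ih, pow_succ]
lemma eomega_ne_one (q : ℕ) [NeZero q] {c : ZMod q} (hc : c ≠ 0) : eomega q c ≠ 1 := by
  have hq : 0 < q := Nat.pos_of_ne_zero (NeZero.ne q)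
  intro h1
  rw [eomega, Complex.exp_eq_one_iff] at h1
  obtain ⟨n, hn⟩ := h1
  have hq0 : (q : ℂ) ≠ 0 := Nat.cast_ne_zero.mpr hq.ne'
  have hpi : (2 * (Real.pi : ℂ) * Complex.I) ≠ 0 := by
    simp [Real.pi_ne_zero, Complex.I_ne_zero, Complex.ofReal_ne_zero]
  have h2 := congrArg (· * (q : ℂ)) hn
  simp only [div_mul_cancel₀ _ hq0] at h2
  have hv : ((c.val : ℂ)) = n * q := by
    apply mul_left_cancel₀ hpi
    linear_combination h2
  have hvz : ((c.val : ℤ)) = n * q := by exact_mod_cast hv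
  have hdvd : (q : ℤ) ∣ (c.val : ℤ) := ⟨n, by linarith [hvz]⟩
  have hlt : c.val < q := ZMod.val_lt c
  have : c.val = 0 := by
    have : (q : ℤ) ∣ (c.val : ℤ) := hdvd
    have h0 : ((c.val : ℤ)) = 0 := Int.eq_zero_of_abs_lt_dvd this (by
      rw [abs_of_nonneg (by positivity)]
      exact_mod_cast hlt)
    exact_mod_cast h0
  exact hc (by rwa [← ZMod.val_eq_zero])

lemma key_ne_zero (p q a b : ℕ) (hp : p.Prime) (hq : 0 < q) (hpq : p ∣ q)
    (ha : a < p) (hb : b < p) (hab : a ≠ b) :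
    (((q / p : ℕ) : ZMod q) * ((a : ZMod q) - (b : ZMod q))) ≠ 0 := by
  intro h0
  have h0' : ((((q / p : ℕ) : ℤ) * ((a : ℤ) - b) : ℤ) : ZMod q) = 0 := by
    rw [Int.cast_mul, Int.cast_sub, Int.cast_natCast, Int.cast_natCast, Int.cast_natCast]
    exact h0
  rw [ZMod.intCast_zmod_eq_zero_iff_dvd] at h0'
  have hqe : (q : ℤ) = (p : ℤ) * ((q / p : ℕ) : ℤ) := by
    exact_mod_cast (Nat.mul_div_cancel' hpq).symm
  rw [hqe] at h0'
  obtain ⟨cc, hcc⟩ := h0'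
  have hqp0 : ((q / p : ℕ) : ℤ) ≠ 0 := by
    have : 0 < q / p := Nat.div_pos (Nat.le_of_dvd hq hpq) hp.pos
    exact_mod_cast this.ne'
  have hpd : (p : ℤ) ∣ (a : ℤ) - b := ⟨cc, by
    apply mul_left_cancel₀ hqp0
    linear_combination hcc⟩
  have : ((a : ℤ) - b) = 0 := Int.eq_zero_of_abs_lt_dvd hpd (by
    rw [abs_sub_lt_iff]
    constructor <;> [skip; skip] <;> push_cast <;> omega)
  apply hab
  omega


-- key decomposition lemma
lemma aseq_key (p q m δ k : ℕ) [NeZero q] (mcard : ℕ → ℕ) (pmap : ℕ → ℕ → ℕ)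
    (lam : ℕ → ZMod q) (t₁ t₂ r s σ : ℕ) :
    aseq p q m δ k mcard pmap lam t₁ σ r - aseq p q m δ k mcard pmap lam t₂ σ s
    = (aseq p q m δ k mcard pmap lam t₁ 0 r - aseq p q m δ k mcard pmap lam t₂ 0 s)
      + ∑ β ∈ Finset.Icc 1 k, (dig p σ β : ZMod q) *
          (((q / p : ℕ) : ZMod q) * ((dig p r (pmap β 1) : ZMod q) - (dig p s (pmap β 1) : ZMod q))) := by
  have hdig0 : ∀ β, dig p 0 β = 0 := fun β => by simp [dig]
  have hsplit : ∑ β ∈ Finset.Icc 1 k, (dig p σ β : ZMod q) *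
          (((q / p : ℕ) : ZMod q) * ((dig p r (pmap β 1) : ZMod q) - (dig p s (pmap β 1) : ZMod q)))
      = ((q / p : ℕ) : ZMod q) * ∑ β ∈ Finset.Icc 1 k, (dig p σ β : ZMod q) * (dig p r (pmap β 1) : ZMod q)
        - ((q / p : ℕ) : ZMod q) * ∑ β ∈ Finset.Icc 1 k, (dig p σ β : ZMod q) * (dig p s (pmap β 1) : ZMod q) := by
    rw [Finset.mul_sum, Finset.mul_sum, ← Finset.sum_sub_distrib]
    exact Finset.sum_congr rfl fun β _ => by ring
  rw [hsplit]
  simp only [aseq, hdig0]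
  push_cast
  simp only [zero_mul, Finset.sum_const_zero, add_zero, zero_add]
  ring

/-- if the `p`-ary digits of `r` and `s` differ in position `π_β(1)`
for some `β ∈ {1,…,k}`, then `Σ_{σ=0}^{p^k-1} ω_q^{a^{t₁}_{σ,r} - a^{t₂}_{σ,s}} = 0`. -/
theorem szccs_case_one_sum_zero
    (p q m δ k : ℕ) (hp : p.Prime) (hq : 0 < q) (hpq : p ∣ q)
    (hm : 3 ≤ m) (hδ : δ < m) (hk1 : 1 ≤ k) (hk2 : k ≤ m - δ)
    (mcard : ℕ → ℕ) (pmap : ℕ → ℕ → ℕ) (lam : ℕ → ZMod q)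
    (hmcard : ∀ β ∈ Finset.Icc 1 k, 1 ≤ mcard β)
    (hmaps : ∀ β ∈ Finset.Icc 1 k, ∀ γ ∈ Finset.Icc 1 (mcard β),
      pmap β γ ∈ Finset.Icc 1 (m - δ))
    (hpart : ∀ l ∈ Finset.Icc 1 (m - δ), ∃! bg : ℕ × ℕ,
      bg.1 ∈ Finset.Icc 1 k ∧ bg.2 ∈ Finset.Icc 1 (mcard bg.1) ∧ pmap bg.1 bg.2 = l)
    (t₁ t₂ : ℕ) (ht₁ : t₁ < p ^ (k + δ)) (ht₂ : t₂ < p ^ (k + δ))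
    (r s : ℕ) (hr : r < p ^ m) (hs : s < p ^ m)
    (hdiff : ∃ β ∈ Finset.Icc 1 k, dig p r (pmap β 1) ≠ dig p s (pmap β 1)) :
    ∑ σ ∈ Finset.range (p ^ k),
      eomega q (aseq p q m δ k mcard pmap lam t₁ σ r
        - aseq p q m δ k mcard pmap lam t₂ σ s) = 0 := by
  haveI : NeZero q := ⟨hq.ne'⟩
  obtain ⟨β₀, hβ₀, hne⟩ := hdiff
  rw [Finset.mem_Icc] at hβ₀
  set c : ℕ → ZMod q := fun β => ((q / p : ℕ) : ZMod q) *
      ((dig p r (pmap β 1) : ZMod q) - (dig p s (pmap β 1) : ZMod q)) with hc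
  set z : ℕ → ℂ := fun β => eomega q (c β) with hzdef
  -- rewrite each summand
  have key : ∀ σ, eomega q (aseq p q m δ k mcard pmap lam t₁ σ r
      - aseq p q m δ k mcard pmap lam t₂ σ s)
      = eomega q (aseq p q m δ k mcard pmap lam t₁ 0 r
          - aseq p q m δ k mcard pmap lam t₂ 0 s)
        * ∏ β ∈ Finset.Icc 1 k, z β ^ dig p σ β := by
    intro σ
    rw [aseq_key p q m δ k mcard pmap lam t₁ t₂ r s σ, eomega_add, eomega_sum]
    congr 1
    exact Finset.prod_congr rfl fun β _ => eomega_nat_mul q (dig p σ β) (c β)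
  rw [Finset.sum_congr rfl fun σ _ => key σ]
  rw [← Finset.mul_sum]
  -- the σ-sum vanishes
  have hIcc : ∀ σ, (∏ β ∈ Finset.Icc 1 k, z β ^ dig p σ β)
      = ∏ i ∈ Finset.range k, z (1 + i) ^ dig p σ (1 + i) := by
    intro σ
    rw [show Finset.Icc 1 k = Finset.Ico 1 (k + 1) from (Finset.Ico_add_one_right_eq_Icc 1 k).symm,
      Finset.prod_Ico_eq_prod_range]
    norm_num
  have h1 : ∑ σ ∈ Finset.range (p ^ k), ∏ β ∈ Finset.Icc 1 k, z β ^ dig p σ β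
      = ∑ g : Fin k → Fin p, ∏ i : Fin k, z (1 + (i : ℕ)) ^ (g i : ℕ) := by
    rw [← Fin.sum_univ_eq_sum_range (fun σ => ∏ β ∈ Finset.Icc 1 k, z β ^ dig p σ β) (p ^ k),
      ← Equiv.sum_comp (finFunctionFinEquiv (m := p) (n := k))]
    refine Finset.sum_congr rfl fun g _ => ?_
    rw [hIcc, ← Fin.prod_univ_eq_prod_range]
    refine Finset.prod_congr rfl fun i _ => ?_
    congr 1
    have hg : g i = finFunctionFinEquiv.symm (finFunctionFinEquiv g) i := by
      rw [Equiv.symm_apply_apply]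
    rw [hg]
    simp only [dig, Nat.add_sub_cancel_left]
    rfl
  have h2 : ∑ g : Fin k → Fin p, ∏ i : Fin k, z (1 + (i : ℕ)) ^ (g i : ℕ)
      = ∏ i : Fin k, ∑ x : Fin p, z (1 + (i : ℕ)) ^ (x : ℕ) := by
    rw [Finset.prod_univ_sum (fun _ : Fin k => (Finset.univ : Finset (Fin p)))
      (fun i x => z (1 + (i : ℕ)) ^ (x : ℕ)), Fintype.piFinset_univ]
  rw [h1, h2]
  have hi : (β₀ - 1) < k := by omega
  rw [Finset.prod_eq_zero (Finset.mem_univ (⟨β₀ - 1, hi⟩ : Fin k)) ?_, mul_zero]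
  -- the geometric sum at β₀ vanishes
  have hb : 1 + ((⟨β₀ - 1, hi⟩ : Fin k) : ℕ) = β₀ := by simp; omega
  rw [hb, Fin.sum_univ_eq_sum_range (fun x => z β₀ ^ x) p]
  have ha : dig p r (pmap β₀ 1) < p := Nat.mod_lt _ hp.pos
  have hb' : dig p s (pmap β₀ 1) < p := Nat.mod_lt _ hp.pos
  have hc0 : c β₀ ≠ 0 := key_ne_zero p q _ _ hp hq hpq ha hb' hne
  have hz1 : z β₀ ≠ 1 := eomega_ne_one q hc0
  have hzp : z β₀ ^ p = 1 := by
    rw [hzdef]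
    dsimp only
    rw [← eomega_nat_mul, hc, ← mul_assoc, ← Nat.cast_mul, Nat.mul_div_cancel' hpq,
      ZMod.natCast_self, zero_mul, eomega_zero]
  rw [geom_sum_eq hz1, hzp, sub_self, zero_div]
end

section
/- Let p be a prime, q a positive integer divisible by p, m ≥ 3, 0 ≤ δ < m, and let the functions a^t_σ be defined as in the stated construction. Fix t ∈ {0,…,p^{k+δ}−1}, σ ∈ {0,…,p^k−1}, β ∈ {1,…,k}, and γ with 3 ≤ γ ≤ m_β. Let r ∈ {0,…,p^m−1} have p-ary digits (r_1,…,r_m), and for 1 ≤ j ≤ p−1 let r^j be the integer whose p-ary digits agree with those of r except that the digit in position π_β(γ−1) is (r_{π_β(γ−1)} − j) mod p. Then, with d denoting the integer difference r_{π_β(γ−1)} − r^j_{π_β(γ−1)} of the two digits, the following holds in ℤ_q: a^t_{σ,r} − a^t_{σ,r^j} = d · ((q/p)·r_{π_β(γ−2)} + (q/p)·r_{π_β(γ)} + λ_{π_β(γ−1)}). -/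
open Finset

/-- for `3 ≤ γ ≤ m_β`, if `r^j` agrees with `r` in all digit positions
except `π_β(γ-1)`, where the digit is `(r_{π_β(γ-1)} - j) mod p`, then with
`d = r_{π_β(γ-1)} - r^j_{π_β(γ-1)}` (integer difference of the two digits) one has, in `ℤ_q`,
`a^t_{σ,r} - a^t_{σ,r^j} = d·((q/p)r_{π_β(γ-2)} + (q/p)r_{π_β(γ)} + λ_{π_β(γ-1)})`. -/
theorem szccs_digit_shift_difference
    (p q m δ k : ℕ) (hp : p.Prime) (hq : 0 < q) (hpq : p ∣ q)
    (hm : 3 ≤ m) (hδ : δ < m) (hk1 : 1 ≤ k) (hk2 : k ≤ m - δ)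
    (mcard : ℕ → ℕ) (pmap : ℕ → ℕ → ℕ) (lam : ℕ → ZMod q)
    (hmcard : ∀ β ∈ Finset.Icc 1 k, 1 ≤ mcard β)
    (hmaps : ∀ β ∈ Finset.Icc 1 k, ∀ γ ∈ Finset.Icc 1 (mcard β),
      pmap β γ ∈ Finset.Icc 1 (m - δ))
    (hpart : ∀ l ∈ Finset.Icc 1 (m - δ), ∃! bg : ℕ × ℕ,
      bg.1 ∈ Finset.Icc 1 k ∧ bg.2 ∈ Finset.Icc 1 (mcard bg.1) ∧ pmap bg.1 bg.2 = l)
    (t : ℕ) (ht : t < p ^ (k + δ)) (σ : ℕ) (hσ : σ < p ^ k)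
    (β : ℕ) (hβ : β ∈ Finset.Icc 1 k)
    (γ : ℕ) (hγ : 3 ≤ γ ∧ γ ≤ mcard β)
    (r : ℕ) (hr : r < p ^ m)
    (r' : ℕ → ℕ)
    (hr' : ∀ j ∈ Finset.Icc 1 (p - 1), r' j < p ^ m ∧
      ∀ i ∈ Finset.Icc 1 m, dig p (r' j) i =
        if i = pmap β (γ - 1) then (dig p r i + p - j) % p else dig p r i) :
    ∀ j ∈ Finset.Icc 1 (p - 1),
      aseq p q m δ k mcard pmap lam t σ r - aseq p q m δ k mcard pmap lam t σ (r' j)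
        = (((dig p r (pmap β (γ - 1)) : ℤ)
              - (dig p (r' j) (pmap β (γ - 1)) : ℤ) : ℤ) : ZMod q)
          * ((((q / p) * dig p r (pmap β (γ - 2)) : ℕ) : ZMod q)
              + (((q / p) * dig p r (pmap β γ) : ℕ) : ZMod q)
              + lam (pmap β (γ - 1))) := by
  intro j hj
  obtain ⟨hγ3, hγm⟩ := hγ
  obtain ⟨hrj_lt, hdig⟩ := hr' j hj
  obtain ⟨hβ1, hβk⟩ := Finset.mem_Icc.mp hβ
  set l0 := pmap β (γ - 1) with hl0
  have hγ1mem : γ - 1 ∈ Finset.Icc 1 (mcard β) := Finset.mem_Icc.mpr ⟨by omega, by omega⟩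
  have hl0mem : l0 ∈ Finset.Icc 1 (m - δ) := hmaps β hβ (γ - 1) hγ1mem
  obtain ⟨hl01, hl02⟩ := Finset.mem_Icc.mp hl0mem
  have hl0m : l0 ∈ Finset.Icc 1 m := Finset.mem_Icc.mpr ⟨hl01, by omega⟩
  have key : ∀ β' ∈ Finset.Icc 1 k, ∀ γ' ∈ Finset.Icc 1 (mcard β'),
      pmap β' γ' = l0 → β' = β ∧ γ' = γ - 1 := by
    obtain ⟨w, hw, hu⟩ := hpart l0 hl0mem
    intro β' hβ' γ' hγ' hpe
    have h1 := hu (β', γ') ⟨hβ', hγ', hpe⟩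
    have h2 := hu (β, γ - 1) ⟨hβ, hγ1mem, rfl⟩
    rw [← h2] at h1
    exact ⟨congrArg Prod.fst h1, congrArg Prod.snd h1⟩
  have hmem : ∀ β' ∈ Finset.Icc 1 k, ∀ γ' ∈ Finset.Icc 1 (mcard β'),
      pmap β' γ' ∈ Finset.Icc 1 m := by
    intro β' hβ' γ' hγ'
    obtain ⟨h1, h2⟩ := Finset.mem_Icc.mp (hmaps β' hβ' γ' hγ')
    exact Finset.mem_Icc.mpr ⟨h1, by omega⟩
  set dd : ZMod q := (dig p r l0 : ZMod q) - (dig p (r' j) l0 : ZMod q) with hdd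
  set D : ℕ → ZMod q := fun i => if i = l0 then dd else 0 with hD
  have hdigZ : ∀ i ∈ Finset.Icc 1 m,
      (dig p (r' j) i : ZMod q) = (dig p r i : ZMod q) - D i := by
    intro i hi
    by_cases h : i = l0
    · subst h
      simp only [hD, if_pos rfl, hdd]
      ring
    · rw [hdig i hi, if_neg h]
      simp [hD, h]
  have hD0 : ∀ β' ∈ Finset.Icc 1 k, ∀ γ' ∈ Finset.Icc 1 (mcard β'),
      (β' ≠ β ∨ γ' ≠ γ - 1) → D (pmap β' γ') = 0 := by
    intro β' hβ' γ' hγ' hor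
    simp only [hD]
    rw [if_neg]
    intro h
    obtain ⟨e1, e2⟩ := key β' hβ' γ' hγ' h
    tauto
  -- sum with D in the first slot
  have hsum1 : ∑ β' ∈ Finset.Icc 1 k, ∑ γ' ∈ Finset.Icc 1 (mcard β' - 1),
      D (pmap β' γ') * (dig p r (pmap β' (γ' + 1)) : ZMod q)
      = dd * (dig p r (pmap β γ) : ZMod q) := by
    rw [Finset.sum_eq_single_of_mem β hβ]
    · rw [Finset.sum_eq_single_of_mem (γ - 1) (Finset.mem_Icc.mpr ⟨by omega, by omega⟩)]
      · have hγγ : γ - 1 + 1 = γ := by omega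
        rw [hγγ]
        simp [hD, ← hl0]
      · intro γ' hγ' hne
        obtain ⟨h1, h2⟩ := Finset.mem_Icc.mp hγ'
        rw [hD0 β hβ γ' (Finset.mem_Icc.mpr ⟨h1, by omega⟩) (Or.inr hne), zero_mul]
    · intro β' hβ' hne
      refine Finset.sum_eq_zero fun γ' hγ' => ?_
      obtain ⟨h1, h2⟩ := Finset.mem_Icc.mp hγ'
      rw [hD0 β' hβ' γ' (Finset.mem_Icc.mpr ⟨h1, by omega⟩) (Or.inl hne), zero_mul]
  -- sum with D in the second slot
  have hsum2 : ∑ β' ∈ Finset.Icc 1 k, ∑ γ' ∈ Finset.Icc 1 (mcard β' - 1),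
      (dig p r (pmap β' γ') : ZMod q) * D (pmap β' (γ' + 1))
      = (dig p r (pmap β (γ - 2)) : ZMod q) * dd := by
    rw [Finset.sum_eq_single_of_mem β hβ]
    · rw [Finset.sum_eq_single_of_mem (γ - 2) (Finset.mem_Icc.mpr ⟨by omega, by omega⟩)]
      · have hγγ : γ - 2 + 1 = γ - 1 := by omega
        rw [hγγ]
        simp [hD, ← hl0]
      · intro γ' hγ' hne
        obtain ⟨h1, h2⟩ := Finset.mem_Icc.mp hγ'
        rw [hD0 β hβ (γ' + 1) (Finset.mem_Icc.mpr ⟨by omega, by omega⟩)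
          (Or.inr (by omega)), mul_zero]
    · intro β' hβ' hne
      refine Finset.sum_eq_zero fun γ' hγ' => ?_
      obtain ⟨h1, h2⟩ := Finset.mem_Icc.mp hγ'
      rw [hD0 β' hβ' (γ' + 1) (Finset.mem_Icc.mpr ⟨by omega, by omega⟩)
        (Or.inl hne), mul_zero]
  have hsum3 : ∑ l ∈ Finset.Icc 1 m, lam l * D l = lam l0 * dd := by
    rw [Finset.sum_eq_single_of_mem l0 hl0m]
    · simp [hD]
    · intro l hl hne
      simp [hD, hne]
  have hDD : ∀ β' ∈ Finset.Icc 1 k, ∀ γ' ∈ Finset.Icc 1 (mcard β' - 1),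
      D (pmap β' γ') * D (pmap β' (γ' + 1)) = 0 := by
    intro β' hβ' γ' hγ'
    obtain ⟨h1, h2⟩ := Finset.mem_Icc.mp hγ'
    by_cases ha : pmap β' γ' = l0
    · obtain ⟨e1, e2⟩ := key β' hβ' γ' (Finset.mem_Icc.mpr ⟨h1, by omega⟩) ha
      have hb : pmap β' (γ' + 1) ≠ l0 := by
        intro hb
        obtain ⟨f1, f2⟩ := key β' hβ' (γ' + 1) (Finset.mem_Icc.mpr ⟨by omega, by omega⟩) hb
        omega
      simp [hD, hb]
    · simp [hD, ha]
  have hquad : ∑ β' ∈ Finset.Icc 1 k, ∑ γ' ∈ Finset.Icc 1 (mcard β' - 1),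
      (dig p (r' j) (pmap β' γ') : ZMod q) * (dig p (r' j) (pmap β' (γ' + 1)) : ZMod q)
      = (∑ β' ∈ Finset.Icc 1 k, ∑ γ' ∈ Finset.Icc 1 (mcard β' - 1),
          (dig p r (pmap β' γ') : ZMod q) * (dig p r (pmap β' (γ' + 1)) : ZMod q))
        - dd * (dig p r (pmap β γ) : ZMod q)
        - (dig p r (pmap β (γ - 2)) : ZMod q) * dd := by
    rw [← hsum1, ← hsum2]
    rw [← Finset.sum_sub_distrib, ← Finset.sum_sub_distrib]
    refine Finset.sum_congr rfl fun β' hβ' => ?_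
    rw [← Finset.sum_sub_distrib, ← Finset.sum_sub_distrib]
    refine Finset.sum_congr rfl fun γ' hγ' => ?_
    obtain ⟨h1, h2⟩ := Finset.mem_Icc.mp hγ'
    have ha := hdigZ (pmap β' γ') (hmem β' hβ' γ' (Finset.mem_Icc.mpr ⟨h1, by omega⟩))
    have hb := hdigZ (pmap β' (γ' + 1))
      (hmem β' hβ' (γ' + 1) (Finset.mem_Icc.mpr ⟨by omega, by omega⟩))
    have hdd0 := hDD β' hβ' γ' hγ'
    rw [ha, hb]
    linear_combination hdd0
  have hlin : ∑ l ∈ Finset.Icc 1 m, lam l * (dig p (r' j) l : ZMod q)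
      = (∑ l ∈ Finset.Icc 1 m, lam l * (dig p r l : ZMod q)) - lam l0 * dd := by
    rw [← hsum3, ← Finset.sum_sub_distrib]
    refine Finset.sum_congr rfl fun l hl => ?_
    rw [hdigZ l hl]
    ring
  -- the σ, t and δ parts are unchanged (natural-number sums)
  have hS1 : ∑ β' ∈ Finset.Icc 1 k, dig p σ β' * dig p (r' j) (pmap β' 1)
      = ∑ β' ∈ Finset.Icc 1 k, dig p σ β' * dig p r (pmap β' 1) := by
    refine Finset.sum_congr rfl fun β' hβ' => ?_
    have h1 : (1 : ℕ) ∈ Finset.Icc 1 (mcard β') :=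
      Finset.mem_Icc.mpr ⟨le_refl 1, hmcard β' hβ'⟩
    rw [hdig (pmap β' 1) (hmem β' hβ' 1 h1), if_neg]
    intro h
    obtain ⟨e1, e2⟩ := key β' hβ' 1 h1 h
    omega
  have hS2 : ∑ β' ∈ Finset.Icc 1 k, dig p t β' * dig p (r' j) (pmap β' (mcard β'))
      = ∑ β' ∈ Finset.Icc 1 k, dig p t β' * dig p r (pmap β' (mcard β')) := by
    refine Finset.sum_congr rfl fun β' hβ' => ?_
    have h1 : mcard β' ∈ Finset.Icc 1 (mcard β') :=
      Finset.mem_Icc.mpr ⟨hmcard β' hβ', le_refl _⟩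
    rw [hdig (pmap β' (mcard β')) (hmem β' hβ' (mcard β') h1), if_neg]
    intro h
    obtain ⟨e1, e2⟩ := key β' hβ' (mcard β') h1 h
    subst e1
    omega
  have hS3 : ∑ β' ∈ Finset.Icc 1 δ, dig p t (k + β') * dig p (r' j) (m - δ + β')
      = ∑ β' ∈ Finset.Icc 1 δ, dig p t (k + β') * dig p r (m - δ + β') := by
    refine Finset.sum_congr rfl fun β' hβ' => ?_
    obtain ⟨h1, h2⟩ := Finset.mem_Icc.mp hβ'
    rw [hdig (m - δ + β') (Finset.mem_Icc.mpr ⟨by omega, by omega⟩), if_neg (by omega)]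
  unfold aseq
  rw [hS1, hS2, hS3]
  push_cast
  rw [hquad, hlin, hdd]
  ring
end

section
/- Let p be a prime, q a positive integer divisible by p, m ≥ 3, 0 ≤ δ < m, and let the functions a^t_σ be defined as in the stated construction. Then for all t₁ ≠ t₂ in {0,…,p^{k+δ}−1} and every σ ∈ {0,…,p^k−1}, the full-length exponential sum vanishes: Σ_{r=0}^{p^m−1} ω_q^{a^{t₁}_{σ,r} − a^{t₂}_{σ,r}} = 0. Consequently, the sum of aperiodic cross-correlations at shift zero vanishes: Σ_{σ=0}^{p^k−1} C(a^{t₁}_σ, a^{t₂}_σ)(0) = 0. -/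
open Finset

noncomputable def zet (q : ℕ) : ℂ := Complex.exp (2 * Real.pi * Complex.I / q)

lemma zet_ne_zero (q : ℕ) : zet q ≠ 0 := Complex.exp_ne_zero _

lemma zet_pow (q n : ℕ) : zet q ^ n = Complex.exp (n * (2 * Real.pi * Complex.I / q)) :=
  (Complex.exp_nat_mul _ n).symm

lemma zet_pow_q {q : ℕ} (hq : 0 < q) : zet q ^ q = 1 := by
  rw [zet_pow]
  have hq0 : (q : ℂ) ≠ 0 := Nat.cast_ne_zero.mpr hq.ne'
  rw [show (q:ℂ) * (2 * Real.pi * Complex.I / q) = 2 * Real.pi * Complex.I from by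
    field_simp]
  exact Complex.exp_two_pi_mul_I

lemma eomega_natCast {q : ℕ} (hq : 0 < q) (n : ℕ) : eomega q (n : ZMod q) = zet q ^ n := by
  haveI : NeZero q := ⟨hq.ne'⟩
  unfold eomega
  rw [ZMod.val_natCast]
  conv_rhs => rw [← Nat.div_add_mod n q]
  rw [pow_add, pow_mul, zet_pow_q hq, one_pow, one_mul, zet_pow]
  congr 1
  ring

lemma eomega_intCast {q : ℕ} (hq : 0 < q) (n : ℤ) : eomega q ((n : ZMod q)) = zet q ^ n := by
  have h0 : (0:ℤ) ≤ n % q := Int.emod_nonneg n (by exact_mod_cast hq.ne')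
  have heq : ((n % q).toNat : ℤ) = n % q := Int.toNat_of_nonneg h0
  have h1 : ((n : ZMod q)) = (((n % q).toNat : ℕ) : ZMod q) := by
    calc (n : ZMod q) = (((q:ℤ) * (n / q) + n % q : ℤ) : ZMod q) := by rw [Int.mul_ediv_add_emod]
    _ = ((n % q : ℤ) : ZMod q) := by push_cast [ZMod.natCast_self]; ring
    _ = (((n % q).toNat : ℤ) : ZMod q) := by rw [heq]
    _ = _ := by push_cast; rfl
  rw [h1, eomega_natCast hq, ← zpow_natCast, heq]
  conv_rhs => rw [← Int.mul_ediv_add_emod n q]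
  rw [zpow_add₀ (zet_ne_zero q), zpow_mul]
  have hz : zet q ^ ((q:ℕ):ℤ) = 1 := by rw [zpow_natCast, zet_pow_q hq]
  rw [hz, one_zpow, one_mul]


lemma sum_range_mul {M : Type*} [AddCommMonoid M] (f : ℕ → M) (a b : ℕ) :
    ∑ r ∈ Finset.range (a * b), f r
      = ∑ j ∈ Finset.range b, ∑ i ∈ Finset.range a, f (i + a * j) := by
  induction b with
  | zero => simp
  | succ b ih =>
    rw [Finset.sum_range_succ, ← ih, Nat.mul_succ, Finset.range_eq_Ico,
      ← Finset.sum_Ico_consecutive _ (Nat.zero_le (a*b)) (Nat.le_add_right (a*b) a)]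
    congr 1
    · rw [Finset.range_eq_Ico]
    rw [Finset.sum_Ico_eq_sum_range, Nat.add_sub_cancel_left]
    exact Finset.sum_congr rfl fun i _ => by rw [Nat.add_comm]

lemma dig_special {p : ℕ} (hp0 : 0 < p) {l i b : ℕ} (c : ℕ) (hl : 1 ≤ l)
    (hi : i < p^(l-1)) (hb : b < p) :
    dig p (i + p^(l-1) * (b + p * c)) l = b := by
  unfold dig
  rw [Nat.add_mul_div_left _ _ (pow_pos hp0 _), Nat.div_eq_of_lt hi, zero_add,
    Nat.add_mul_mod_self_left, Nat.mod_eq_of_lt hb]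

lemma dig_indep {p : ℕ} (hp0 : 0 < p) {l n i b : ℕ} (c : ℕ) (hl : 1 ≤ l) (hn : 1 ≤ n)
    (hnl : n ≠ l) (hi : i < p^(l-1)) (hb : b < p) :
    dig p (i + p^(l-1) * (b + p * c)) n = dig p (i + p^(l-1) * (p * c)) n := by
  unfold dig
  rcases lt_or_gt_of_ne hnl with h | h
  · have hfac : p^(l-1) = p^(n-1) * p^(l-n) := by rw [← pow_add]; congr 1; omega
    have h2 : ∀ s : ℕ, p^(l-n) * s = p * (p^(l-n-1) * s) := by
      intro s
      rw [← mul_assoc]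
      congr 1
      rw [← pow_succ']
      congr 1; omega
    rw [hfac, mul_assoc, mul_assoc, Nat.add_mul_div_left _ _ (pow_pos hp0 _),
      Nat.add_mul_div_left _ _ (pow_pos hp0 _), h2, h2,
      Nat.add_mul_mod_self_left, Nat.add_mul_mod_self_left]
  · have hll : p^l = p^(l-1) * p := by rw [← pow_succ]; congr 1; omega
    have key : ∀ s : ℕ, s < p^l → (s + p^l * c) / p^(n-1) = c / p^(n-1-l) := by
      intro s hs
      conv_lhs => rw [show n-1 = l + (n-1-l) from by omega]
      rw [pow_add, ← Nat.div_div_eq_div_mul,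
        Nat.add_mul_div_left _ _ (pow_pos hp0 _), Nat.div_eq_of_lt hs, zero_add]
    have e1 : i + p^(l-1)*(b+p*c) = (i + p^(l-1)*b) + p^l * c := by
      rw [hll]; ring
    have e2 : i + p^(l-1)*(p*c) = (i + p^(l-1)*0) + p^l * c := by
      rw [hll]; ring
    have hb1 : i + p^(l-1)*b < p^l := by
      calc i + p^(l-1)*b < p^(l-1) + p^(l-1)*b := by omega
      _ = p^(l-1) * (1+b) := by ring
      _ ≤ p^(l-1) * p := Nat.mul_le_mul_left _ (by omega)
      _ = p^l := hll.symm
    have hb2 : i + p^(l-1)*0 < p^l := by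
      have : p^(l-1) ≤ p^l := Nat.pow_le_pow_right hp0 (by omega)
      omega
    rw [e1, e2, key _ hb1, key _ hb2]

lemma eq_of_dig {p : ℕ} (hp : 1 < p) : ∀ n a b, a < p^n → b < p^n →
    (∀ j, 1 ≤ j → j ≤ n → dig p a j = dig p b j) → a = b := by
  intro n
  induction n with
  | zero => intro a b ha hb _; simp at ha hb; omega
  | succ n ih =>
    intro a b ha hb h
    have hp0 : 0 < p := by omega
    have h1 : a % p = b % p := by
      have := h 1 le_rfl (by omega)
      simpa [dig] using this
    have hdig : ∀ x j, 1 ≤ j → dig p (x / p) j = dig p x (j+1) := by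
      intro x j hj
      unfold dig
      rw [Nat.div_div_eq_div_mul]
      congr 2
      rw [← pow_succ']
      congr 1; omega
    have h2 : a / p = b / p := by
      apply ih
      · rw [Nat.div_lt_iff_lt_mul hp0, ← pow_succ]; exact ha
      · rw [Nat.div_lt_iff_lt_mul hp0, ← pow_succ]; exact hb
      · intro j hj1 hjn
        rw [hdig a j hj1, hdig b j hj1]
        exact h (j+1) (by omega) (by omega)
    have e1 := Nat.div_add_mod a p
    have e2 := Nat.div_add_mod b p
    rw [h2, h1] at e1
    omega

lemma exists_dig_ne {p n a b : ℕ} (hp : 1 < p) (ha : a < p^n) (hb : b < p^n) (hne : a ≠ b) :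
    ∃ j, 1 ≤ j ∧ j ≤ n ∧ dig p a j ≠ dig p b j := by
  by_contra h
  push_neg at h
  exact hne (eq_of_dig hp n a b ha hb fun j h1 h2 => h j h1 h2)

/-- for `t₁ ≠ t₂`, the full-length exponential sum
`Σ_{r=0}^{p^m-1} ω_q^{a^{t₁}_{σ,r} - a^{t₂}_{σ,r}}` vanishes for every `σ`, and
consequently `Σ_{σ=0}^{p^k-1} C(a^{t₁}_σ, a^{t₂}_σ)(0) = 0`. -/
theorem szccs_zero_shift_ccf
    (p q m δ k : ℕ) (hp : p.Prime) (hq : 0 < q) (hpq : p ∣ q)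
    (hm : 3 ≤ m) (hδ : δ < m) (hk1 : 1 ≤ k) (hk2 : k ≤ m - δ)
    (mcard : ℕ → ℕ) (pmap : ℕ → ℕ → ℕ) (lam : ℕ → ZMod q)
    (hmcard : ∀ β ∈ Finset.Icc 1 k, 1 ≤ mcard β)
    (hmaps : ∀ β ∈ Finset.Icc 1 k, ∀ γ ∈ Finset.Icc 1 (mcard β),
      pmap β γ ∈ Finset.Icc 1 (m - δ))
    (hpart : ∀ l ∈ Finset.Icc 1 (m - δ), ∃! bg : ℕ × ℕ,
      bg.1 ∈ Finset.Icc 1 k ∧ bg.2 ∈ Finset.Icc 1 (mcard bg.1) ∧ pmap bg.1 bg.2 = l)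
    (t₁ t₂ : ℕ) (ht₁ : t₁ < p ^ (k + δ)) (ht₂ : t₂ < p ^ (k + δ)) (hne : t₁ ≠ t₂) :
    (∀ σ < p ^ k,
      ∑ r ∈ Finset.range (p ^ m),
        eomega q (aseq p q m δ k mcard pmap lam t₁ σ r
          - aseq p q m δ k mcard pmap lam t₂ σ r) = 0) ∧
    ∑ σ ∈ Finset.range (p ^ k),
      ccorr q (p ^ m) (aseq p q m δ k mcard pmap lam t₁ σ)
        (aseq p q m δ k mcard pmap lam t₂ σ) 0 = 0 := by
  have hp0 : 0 < p := hp.pos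
  have hp1 : 1 < p := hp.one_lt
  have key : ∀ σ < p ^ k,
      ∑ r ∈ Finset.range (p ^ m),
        eomega q (aseq p q m δ k mcard pmap lam t₁ σ r
          - aseq p q m δ k mcard pmap lam t₂ σ r) = 0 := by
    intro σ hσ
    obtain ⟨j₀, hj₀1, hj₀2, hj₀ne⟩ := exists_dig_ne hp1 ht₁ ht₂ hne
    set P : ℕ → ℕ := fun j => if j ≤ k then pmap j (mcard j) else m - δ + (j - k) with hPdef
    have hPIcc : ∀ j, 1 ≤ j → j ≤ k → P j ∈ Finset.Icc 1 (m - δ) := by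
      intro j h1 h2
      have := hmaps j (Finset.mem_Icc.mpr ⟨h1, h2⟩) (mcard j)
        (Finset.mem_Icc.mpr ⟨hmcard j (Finset.mem_Icc.mpr ⟨h1, h2⟩), le_rfl⟩)
      simpa [hPdef, if_pos h2] using this
    have hP1 : ∀ j, 1 ≤ j → j ≤ k + δ → 1 ≤ P j := by
      intro j h1 h2
      by_cases h : j ≤ k
      · exact (Finset.mem_Icc.mp (hPIcc j h1 h)).1
      · simp only [hPdef, if_neg h]; omega
    set l : ℕ := P j₀ with hldef
    have hl1 : 1 ≤ l := hP1 j₀ hj₀1 hj₀2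
    have hlm : l ≤ m := by
      by_cases h : j₀ ≤ k
      · have := (Finset.mem_Icc.mp (hPIcc j₀ hj₀1 h)).2
        rw [hldef]; omega
      · rw [hldef]; simp only [hPdef, if_neg h]; omega
    have hPne : ∀ j, 1 ≤ j → j ≤ k + δ → j ≠ j₀ → P j ≠ l := by
      intro j h1 h2 hne' heq
      by_cases hjk : j ≤ k <;> by_cases hj0k : j₀ ≤ k
      · have hjm : j ∈ Finset.Icc 1 k := Finset.mem_Icc.mpr ⟨h1, hjk⟩
        have hj0m : j₀ ∈ Finset.Icc 1 k := Finset.mem_Icc.mpr ⟨hj₀1, hj0k⟩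
        have hv : pmap j₀ (mcard j₀) ∈ Finset.Icc 1 (m - δ) := by
          have := hPIcc j₀ hj₀1 hj0k
          simpa [hPdef, if_pos hj0k] using this
        obtain ⟨bg, _, huniq⟩ := hpart _ hv
        have heq' : pmap j (mcard j) = pmap j₀ (mcard j₀) := by
          have h' := heq
          rw [hldef] at h'
          simpa [hPdef, if_pos hjk, if_pos hj0k] using h'
        have e1 := huniq (j, mcard j)
          ⟨hjm, Finset.mem_Icc.mpr ⟨hmcard j hjm, le_rfl⟩, heq'⟩
        have e2 := huniq (j₀, mcard j₀)
          ⟨hj0m, Finset.mem_Icc.mpr ⟨hmcard j₀ hj0m, le_rfl⟩, rfl⟩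
        have : j = j₀ := congrArg Prod.fst (e1.trans e2.symm)
        exact hne' this
      · have hub := (Finset.mem_Icc.mp (hPIcc j h1 hjk)).2
        have hlv : l = m - δ + (j₀ - k) := by rw [hldef]; simp only [hPdef, if_neg hj0k]
        omega
      · have hub := (Finset.mem_Icc.mp (hPIcc j₀ hj₀1 hj0k)).2
        have hlv : l = pmap j₀ (mcard j₀) := by rw [hldef]; simp only [hPdef, if_pos hj0k]
        have hPj : P j = m - δ + (j - k) := by simp only [hPdef, if_neg hjk]
        omega
      · have hPj : P j = m - δ + (j - k) := by simp only [hPdef, if_neg hjk]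
        have hlv : l = m - δ + (j₀ - k) := by rw [hldef]; simp only [hPdef, if_neg hj0k]
        omega
    set c₀ : ℤ := (dig p t₁ j₀ : ℤ) - (dig p t₂ j₀ : ℤ) with hc₀
    have hc₀ne : c₀ ≠ 0 := sub_ne_zero.mpr (by exact_mod_cast hj₀ne)
    have hdlt : ∀ t j, dig p t j < p := fun t j => Nat.mod_lt _ hp0
    have hc₀lt : |c₀| < p := by
      have h1 := hdlt t₁ j₀
      have h2 := hdlt t₂ j₀
      rw [abs_lt]
      constructor <;> [skip; skip] <;> push_cast <;> omega
    set ξ : ℂ := Complex.exp (2 * Real.pi * Complex.I / p) with hξ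
    have hprim : IsPrimitiveRoot ξ p := Complex.isPrimitiveRoot_exp p hp0.ne'
    set x : ℂ := ξ ^ c₀ with hxdef
    have hzqp : zet q ^ (((q/p : ℕ)) : ℤ) = ξ := by
      rw [zpow_natCast, zet_pow, hξ]
      congr 1
      have hpC : (p:ℂ) ≠ 0 := Nat.cast_ne_zero.mpr hp0.ne'
      have hqC : (q:ℂ) ≠ 0 := Nat.cast_ne_zero.mpr hq.ne'
      have hpq' : ((q/p : ℕ):ℂ) = (q:ℂ) / (p:ℂ) := by
        rw [eq_div_iff hpC]
        exact_mod_cast (Nat.div_mul_cancel hpq)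
      rw [hpq']
      field_simp
    have hx1 : x ≠ 1 := by
      intro h
      have hdvd : (p:ℤ) ∣ c₀ := (hprim.zpow_eq_one_iff_dvd c₀).mp h
      have hle : (p:ℤ) ≤ |c₀| := Int.le_of_dvd (abs_pos.mpr hc₀ne) ((dvd_abs _ _).mpr hdvd)
      linarith
    have hxp : x ^ p = 1 := by
      rw [hxdef, ← zpow_natCast (ξ ^ c₀) p, ← zpow_mul, mul_comm, zpow_mul, zpow_natCast,
        hprim.pow_eq_one, one_zpow]
    have hgeom : ∑ b ∈ Finset.range p, x ^ b = 0 := by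
      have h := geom_sum_mul x p
      rw [hxp, sub_self] at h
      rcases mul_eq_zero.mp h with h' | h'
      · exact h'
      · exact absurd (sub_eq_zero.mp h') hx1
    have hsplit : ∀ (t r : ℕ),
        ∑ j ∈ Finset.Icc 1 (k+δ), (dig p t j : ℤ) * (dig p r (P j) : ℤ)
        = ((∑ β ∈ Finset.Icc 1 k, dig p t β * dig p r (pmap β (mcard β)) : ℕ) : ℤ)
          + ((∑ β ∈ Finset.Icc 1 δ, dig p t (k+β) * dig p r (m-δ+β) : ℕ) : ℤ) := by
      intro t r
      have hU : Finset.Icc 1 (k+δ) = Finset.Icc 1 k ∪ Finset.Icc (k+1) (k+δ) := by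
        ext y; simp only [Finset.mem_Icc, Finset.mem_union]; omega
      have hD : Disjoint (Finset.Icc 1 k) (Finset.Icc (k+1) (k+δ)) := by
        simp only [Finset.disjoint_left, Finset.mem_Icc]
        omega
      rw [hU, Finset.sum_union hD]
      congr 1
      · push_cast
        apply Finset.sum_congr rfl
        intro j hj
        have hPj : P j = pmap j (mcard j) := by
          simp only [hPdef, if_pos (Finset.mem_Icc.mp hj).2]
        rw [hPj]
      · rw [show Finset.Icc (k+1) (k+δ) = (Finset.Icc 1 δ).map (addLeftEmbedding k) from
          (Finset.map_add_left_Icc 1 δ k).symm, Finset.sum_map]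
        push_cast
        apply Finset.sum_congr rfl
        intro β hβ
        have hβ' := Finset.mem_Icc.mp hβ
        have h1 : addLeftEmbedding k β = k + β := rfl
        have h2 : P (k + β) = m - δ + β := by
          simp only [hPdef]
          rw [if_neg (by omega)]
          congr 1
          omega
        rw [h1, h2]
    have hdiff : ∀ r : ℕ,
        aseq p q m δ k mcard pmap lam t₁ σ r - aseq p q m δ k mcard pmap lam t₂ σ r
        = ((((q/p : ℕ) : ℤ) * ∑ j ∈ Finset.Icc 1 (k+δ),
            ((dig p t₁ j : ℤ) - (dig p t₂ j : ℤ)) * (dig p r (P j) : ℤ) : ℤ) : ZMod q) := by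
      intro r
      have cancel : ∀ (Z : ZMod q) (X₁ X₂ : ℕ) (Y : ℤ), ((X₁:ℤ) - (X₂:ℤ) = Y) →
          (Z + (X₁ : ZMod q)) - (Z + (X₂ : ZMod q)) = ((Y : ZMod q)) := by
        intro Z X₁ X₂ Y h
        rw [← h]
        push_cast
        ring
      unfold aseq
      apply cancel
      simp only [sub_mul, Finset.sum_sub_distrib, hsplit t₁ r, hsplit t₂ r]
      push_cast
      ring
    calc ∑ r ∈ Finset.range (p ^ m),
          eomega q (aseq p q m δ k mcard pmap lam t₁ σ r - aseq p q m δ k mcard pmap lam t₂ σ r)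
        = ∑ r ∈ Finset.range (p ^ m), zet q ^ (((q/p:ℕ):ℤ) * ∑ j ∈ Finset.Icc 1 (k+δ),
            ((dig p t₁ j:ℤ) - (dig p t₂ j:ℤ)) * (dig p r (P j):ℤ)) := by
          refine Finset.sum_congr rfl fun r _ => ?_
          rw [hdiff r, eomega_intCast hq]
      _ = 0 := by
          rw [show p ^ m = p^(l-1) * p^(m-l+1) from by rw [← pow_add]; congr 1; omega,
            sum_range_mul, show p^(m-l+1) = p * p^(m-l) from pow_succ' p (m-l),
            sum_range_mul]
          apply Finset.sum_eq_zero
          intro c hc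
          rw [Finset.sum_comm]
          apply Finset.sum_eq_zero
          intro i hi
          have hi' : i < p^(l-1) := Finset.mem_range.mp hi
          set K : ℤ := ∑ j ∈ (Finset.Icc 1 (k+δ)).erase j₀,
            ((dig p t₁ j : ℤ) - (dig p t₂ j : ℤ)) * (dig p (i + p^(l-1)*(p*c)) (P j) : ℤ) with hK
          have hterm : ∀ b ∈ Finset.range p,
              zet q ^ (((q/p:ℕ):ℤ) * ∑ j ∈ Finset.Icc 1 (k+δ),
                ((dig p t₁ j:ℤ) - (dig p t₂ j:ℤ)) * (dig p (i + p^(l-1)*(b + p*c)) (P j):ℤ))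
              = x ^ b * zet q ^ (((q/p:ℕ):ℤ) * K) := by
            intro b hb
            have hb' : b < p := Finset.mem_range.mp hb
            have hj₀mem : j₀ ∈ Finset.Icc 1 (k+δ) := Finset.mem_Icc.mpr ⟨hj₀1, hj₀2⟩
            have hD : ∑ j ∈ Finset.Icc 1 (k+δ),
                ((dig p t₁ j:ℤ) - (dig p t₂ j:ℤ)) * (dig p (i + p^(l-1)*(b+p*c)) (P j):ℤ)
                = K + c₀ * b := by
              rw [← Finset.sum_erase_add _ _ hj₀mem]
              congr 1
              · rw [hK]
                refine Finset.sum_congr rfl fun j hj => ?_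
                obtain ⟨hjne, hjmem⟩ := Finset.mem_erase.mp hj
                obtain ⟨hja, hjb⟩ := Finset.mem_Icc.mp hjmem
                rw [dig_indep hp0 c hl1 (hP1 j hja hjb) (hPne j hja hjb hjne) hi' hb']
              · rw [← hldef, dig_special hp0 c hl1 hi' hb', hc₀]
            rw [hD, show ((q/p:ℕ):ℤ) * (K + c₀ * (b:ℤ))
                = (((q/p:ℕ):ℤ) * c₀) * (b:ℤ) + ((q/p:ℕ):ℤ) * K from by ring,
              zpow_add₀ (zet_ne_zero q), zpow_mul, zpow_natCast]
            congr 2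
            rw [zpow_mul, hzqp, ← hxdef]
          rw [Finset.sum_congr rfl hterm, ← Finset.sum_mul, hgeom, zero_mul]
  refine ⟨key, ?_⟩
  apply Finset.sum_eq_zero
  intro σ hσ
  have h := key σ (Finset.mem_range.mp hσ)
  simpa [ccorr] using h
end
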